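/- arXiv:0903.1741 — 12 statements merged into one kernel-verified Lean document; each statement's English description precedes it below -/
import Mathlib

section
/- Let a group Γ act by homeomorphisms on a compact Hausdorff space X such that every orbit is finite and the action is uniformly continuous (for every x ∈ X and every neighborhood W of x there is a neighborhood V of x with g•V ⊆ W for every g in the stabilizer of x). Then the action is Lyapunov stable: for every entourage U of the unique uniform structure on X there is an entourage V such that (g•x, g•y) ∈ U for all g ∈ Γ whenever (x,y) ∈ V. -/
/-- For actions by homeomorphisms on a compact Hausdorff space with all orbits finite,
uniform continuity implies Lyapunov stability. -/
theorem stmt1 {Γ X : Type*} [Group Γ] [UniformSpace X] [CompactSpace X] [T2Space X]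
    [MulAction Γ X] [ContinuousConstSMul Γ X]
    (hfin : ∀ x : X, (MulAction.orbit Γ x).Finite)
    (hUC : ∀ x : X, ∀ W ∈ nhds x, ∃ V ∈ nhds x, ∀ g : Γ, g • x = x → ∀ y ∈ V, g • y ∈ W) :
    ∀ U ∈ uniformity X, ∃ V ∈ uniformity X,
      ∀ (g : Γ) (x y : X), (x, y) ∈ V → (g • x, g • y) ∈ U := by
  classical
  have key : Equicontinuous (fun g : Γ => fun y : X => g • y) := by
    intro x U hU
    set rep : X → Γ := fun z => if h : ∃ g : Γ, g • x = z then h.choose else 1 with hrepdef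
    have hrep : ∀ z ∈ MulAction.orbit Γ x, rep z • x = z := by
      intro z hz
      obtain ⟨g, hg⟩ := hz
      have h : ∃ g : Γ, g • x = z := ⟨g, hg⟩
      simp only [hrepdef, dif_pos h]
      exact h.choose_spec
    have hWz : ∀ z : X, (fun w => rep z • w) ⁻¹' UniformSpace.ball (rep z • x) U ∈ nhds x := by
      intro z
      exact (continuous_const_smul (rep z)).continuousAt.preimage_mem_nhds
        (UniformSpace.ball_mem_nhds _ hU)
    have hWmem : (⋂ z ∈ MulAction.orbit Γ x,
        (fun w => rep z • w) ⁻¹' UniformSpace.ball (rep z • x) U) ∈ nhds x :=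
      (Filter.biInter_mem (hfin x)).2 fun z _ => hWz z
    obtain ⟨V, hV, hVW⟩ := hUC x _ hWmem
    filter_upwards [hV] with y hy g
    have hz : g • x ∈ MulAction.orbit Γ x := ⟨g, rfl⟩
    have hzx : rep (g • x) • x = g • x := hrep _ hz
    have hstab : ((rep (g • x))⁻¹ * g) • x = x := by
      rw [mul_smul]; exact inv_smul_eq_iff.2 hzx.symm
    have hmem := hVW _ hstab y hy
    rw [Set.mem_iInter₂] at hmem
    have := hmem (g • x) hz
    simp only [Set.mem_preimage, UniformSpace.ball, smul_smul] at this
    rw [hzx, mul_inv_cancel_left] at this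
    exact this
  have huni := CompactSpace.uniformEquicontinuous_of_equicontinuous key
  intro U hU
  exact ⟨{p : X × X | ∀ g : Γ, (g • p.1, g • p.2) ∈ U}, huni U hU, fun g x y hxy => hxy g⟩
end

section
/- Let a group Γ act by homeomorphisms on a compact Hausdorff space X, with the action Lyapunov stable with respect to the unique compatible uniform structure. Then for every continuous function φ : X → ℂ and every x ∈ X, the function φ_x : Γ → ℂ defined by φ_x(g) = φ(g•x) is almost periodic, i.e., the set of left translates {g ↦ φ_x(hg) : h ∈ Γ} is totally bounded in the sup-norm on bounded functions Γ → ℂ. -/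
/-- For a Lyapunov stable action on a compact Hausdorff space, the functions
`φ_x : g ↦ φ(g • x)` are almost periodic: the set of left translates is totally bounded
in the uniform structure of uniform (sup-norm) convergence. -/
theorem stmt2 {Γ X : Type*} [Group Γ] [UniformSpace X] [CompactSpace X] [T2Space X]
    [MulAction Γ X] [ContinuousConstSMul Γ X]
    (hLyap : ∀ U ∈ uniformity X, ∃ V ∈ uniformity X,
      ∀ (g : Γ) (x y : X), (x, y) ∈ V → (g • x, g • y) ∈ U)
    (φ : C(X, ℂ)) (x : X) :
    TotallyBounded
      {F : UniformFun Γ ℂ | ∃ h : Γ, F = UniformFun.ofFun fun g => φ ((h * g) • x)} := by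
  rw [(UniformFun.hasBasis_uniformity Γ ℂ).totallyBounded_iff]
  intro U₀ hU₀
  -- symmetric entourages for chaining
  obtain ⟨U₂, hU₂, hU₂symm, hU₂comp⟩ := comp_symm_mem_uniformity_sets hU₀
  obtain ⟨U₁, hU₁, hU₁symm, hU₁comp⟩ := comp_symm_mem_uniformity_sets hU₂
  -- uniform continuity of φ
  have hφ : UniformContinuous φ := CompactSpace.uniformContinuous_of_continuous φ.continuous
  set W : Set (X × X) := {p | (φ p.1, φ p.2) ∈ U₁} with hWdef
  have hW : W ∈ uniformity X := hφ hU₁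
  -- Lyapunov entourage
  obtain ⟨V₀, hV₀, hV₀W⟩ := hLyap W hW
  set V : Set (X × X) := V₀ ∩ W with hVdef
  have hV : V ∈ uniformity X := Filter.inter_mem hV₀ hW
  -- finite cover of X by V-balls
  obtain ⟨t, htfin, htcov⟩ := (isCompact_univ.totallyBounded : TotallyBounded (Set.univ : Set X))
    V hV
  haveI : Fintype ↥t := htfin.fintype
  -- selection function: each point is V-close to some center
  have hsel : ∀ y : X, ∃ w, w ∈ t ∧ (y, w) ∈ V := by
    intro y
    have := htcov (Set.mem_univ y)
    simp only [Set.mem_iUnion] at this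
    obtain ⟨w, hw, hwy⟩ := this
    exact ⟨w, hw, hwy⟩
  choose sel hselt hselV using hsel
  -- the pattern of a group element
  set P : Γ → (↥t → ↥t) := fun h j => ⟨sel (h • (j : X)), hselt _⟩ with hPdef
  have hPfin : (Set.range P).Finite := Set.toFinite _
  haveI : Finite ↥(Set.range P) := hPfin.to_subtype
  -- representatives
  have hrep : ∀ p : ↥(Set.range P), ∃ h : Γ, P h = (p : ↥t → ↥t) := fun p => p.2
  choose rep hrepP using hrep
  refine ⟨Set.range (fun p : ↥(Set.range P) =>
      UniformFun.ofFun fun g => φ ((rep p * g) • x)), Set.finite_range _, ?_⟩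
  rintro F ⟨h, rfl⟩
  refine Set.mem_iUnion₂.2 ⟨_, ⟨⟨P h, Set.mem_range_self h⟩, rfl⟩, ?_⟩
  intro g
  simp only [UniformFun.gen, UniformFun.toFun_ofFun]
  set h' := rep ⟨P h, Set.mem_range_self h⟩ with hh'
  have hPP : P h' = P h := hrepP _
  set z : X := g • x with hz
  rw [mul_smul, mul_smul]
  show (φ (h • z), φ (h' • z)) ∈ U₀
  set j : ↥t := ⟨sel z, hselt z⟩ with hj
  have hjz : (z, (j : X)) ∈ V := hselV z
  -- g-translates of z stay close to translates of the center j
  have hc1 : (φ (h' • z), φ (h' • (j : X))) ∈ U₁ := hV₀W h' _ _ hjz.1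
  have hc2 : (φ (h • z), φ (h • (j : X))) ∈ U₁ := hV₀W h _ _ hjz.1
  -- both h' • j and h • j are V-close to the common center P h j
  have hw1 : (φ (h' • (j : X)), φ ((P h' j : X))) ∈ U₁ := (hselV (h' • (j : X))).2
  have hw2 : (φ (h • (j : X)), φ ((P h j : X))) ∈ U₁ := (hselV (h • (j : X))).2
  rw [hPP] at hw1
  -- chain
  have step1 : (φ (h • z), φ ((P h j : X))) ∈ U₂ :=
    hU₁comp ⟨φ (h • (j : X)), hc2, hw2⟩
  have step2 : (φ ((P h j : X)), φ (h' • z)) ∈ U₂ :=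
    hU₁comp ⟨φ (h' • (j : X)), hU₁symm.symm _ _ hw1, hU₁symm.symm _ _ hc1⟩
  exact hU₂comp ⟨_, step1, step2⟩
end

section
/- Let a group Γ act by homeomorphisms on a compact Hausdorff space X, with the action Lyapunov stable. If x₁, x₂ ∈ X lie in the closure of the same orbit (i.e., x₂ ∈ closure(Γ•x₁)), then for every continuous φ : X → ℂ and every ε > 0 there exists g ∈ Γ such that |φ(h•x₁) − φ(h·g•x₂)| < ε for all h ∈ Γ. Consequently, any Γ-invariant mean applied to the functions φ_{x₁}(g) = φ(g•x₁) and φ_{x₂}(g) = φ(g•x₂) yields the same value; the average is constant on closures of orbits. -/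
open Metric Set

set_option linter.unusedSectionVars false
set_option maxHeartbeats 1000000

section Aux
variable {Γ X : Type*} [Group Γ] [UniformSpace X] [CompactSpace X] [T2Space X]
  [MulAction Γ X] [ContinuousConstSMul Γ X]

noncomputable def Tm (b : Γ) (χ : C(X, ℂ)) : C(X, ℂ) :=
  χ.comp ⟨fun x => b • x, continuous_const_smul b⟩

lemma Tm_apply (b : Γ) (χ : C(X, ℂ)) (x : X) : Tm b χ x = χ (b • x) := rfl

lemma Tm_Tm (b c : Γ) (χ : C(X, ℂ)) : Tm b (Tm c χ) = Tm (c * b) χ := by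
  ext x; simp [Tm_apply, mul_smul]

lemma Tm_one (χ : C(X, ℂ)) : Tm (1 : Γ) χ = χ := by ext x; simp [Tm_apply]

lemma Tm_sub (b : Γ) (χ χ' : C(X, ℂ)) : Tm b (χ - χ') = Tm b χ - Tm b χ' := by
  ext x; simp [Tm_apply]

lemma Tm_norm_le (b : Γ) (χ : C(X, ℂ)) : ‖Tm b χ‖ ≤ ‖χ‖ := by
  refine (ContinuousMap.norm_le _ (norm_nonneg _)).2 fun x => ?_
  exact ContinuousMap.norm_coe_le_norm χ (b • x)

lemma Tm_norm (b : Γ) (χ : C(X, ℂ)) : ‖Tm b χ‖ = ‖χ‖ := by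
  refine le_antisymm (Tm_norm_le b χ) ?_
  have := Tm_norm_le (b⁻¹) (Tm b χ)
  rwa [Tm_Tm, mul_inv_cancel, Tm_one] at this

lemma Tm_linear (b : Γ) : IsLinearMap ℝ (Tm (X := X) b) :=
  ⟨fun χ χ' => by ext x; simp [Tm_apply], fun c χ => by ext x; simp [Tm_apply]⟩

lemma S_totallyBounded
    (hLyap : ∀ U ∈ uniformity X, ∃ V ∈ uniformity X,
      ∀ (g : Γ) (x y : X), (x, y) ∈ V → (g • x, g • y) ∈ U)
    (φ : C(X, ℂ)) :
    TotallyBounded (Set.range fun a : Γ => Tm a φ) := by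
  rw [Metric.totallyBounded_iff]
  intro ε hε
  have hε4 : (0:ℝ) < ε/4 := by linarith
  have hφu : UniformContinuous φ := CompactSpace.uniformContinuous_of_continuous φ.continuous
  have hU : {p : X × X | dist (φ p.1) (φ p.2) < ε/4} ∈ uniformity X :=
    hφu (Metric.dist_mem_uniformity hε4)
  obtain ⟨V, hV, hVU⟩ := hLyap _ hU
  obtain ⟨t, htf, htc⟩ := (isCompact_univ (X := X)).totallyBounded V hV
  haveI : Fintype ↥htf.toFinset := FinsetCoe.fintype _
  set Ψ : Γ → (↥htf.toFinset → ℂ) := fun a z => φ (a • (z : X)) with hΨ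
  have hTB : TotallyBounded (Set.range Ψ) := by
    refine TotallyBounded.subset ?_ (IsCompact.totallyBounded ?_
      (s := Set.pi Set.univ (fun _ : ↥htf.toFinset => Metric.closedBall (0:ℂ) ‖φ‖)))
    · rintro _ ⟨a, rfl⟩
      intro z _
      simpa using φ.norm_coe_le_norm (a • (z : X))
    · exact isCompact_univ_pi (fun _ => isCompact_closedBall _ _)
  obtain ⟨s, hs_sub, hs_fin, hs_cov⟩ := totallyBounded_iff_subset.1 hTB _
    (Metric.dist_mem_uniformity hε4)
  classical
  set pick : (↥htf.toFinset → ℂ) → Γ := fun f => if h : ∃ a, Ψ a = f then h.choose else 1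
    with hpick
  refine ⟨(fun f => Tm (pick f) φ) '' s, hs_fin.image _, ?_⟩
  rintro _ ⟨a, rfl⟩
  have := hs_cov (Set.mem_range_self (f := Ψ) a)
  simp only [Set.mem_iUnion] at this
  obtain ⟨f, hf, hdist⟩ := this
  have hex : ∃ b, Ψ b = f := by
    obtain ⟨b, hb⟩ := hs_sub hf; exact ⟨b, hb⟩
  have hΨb : Ψ (pick f) = f := by
    rw [hpick]; simp only [dif_pos hex]; exact hex.choose_spec
  set b := pick f
  simp only [Set.mem_iUnion]
  refine ⟨Tm b φ, Set.mem_image_of_mem _ hf, ?_⟩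
  have hd : dist (Tm a φ) (Tm b φ) ≤ 3*(ε/4) := by
    refine (ContinuousMap.dist_le (by positivity)).2 fun x => ?_
    have hx : ∃ z ∈ t, (x, z) ∈ V := by
      have := htc (Set.mem_univ x)
      simpa using this
    obtain ⟨z, hzt, hxz⟩ := hx
    have hz' : z ∈ htf.toFinset := htf.mem_toFinset.2 hzt
    have h1 : dist (φ (a • x)) (φ (a • z)) < ε/4 := hVU a x z hxz
    have h3 : dist (φ (b • x)) (φ (b • z)) < ε/4 := hVU b x z hxz
    have h2 : dist (φ (a • z)) (φ (b • z)) < ε/4 := by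
      have := dist_le_pi_dist (Ψ a) (Ψ b) ⟨z, hz'⟩
      have hab : dist (Ψ a) (Ψ b) < ε/4 := by rw [hΨb]; exact hdist
      calc dist (φ (a • z)) (φ (b • z)) ≤ dist (Ψ a) (Ψ b) := this
        _ < ε/4 := hab
    calc dist (Tm a φ x) (Tm b φ x)
        ≤ dist (φ (a • x)) (φ (a • z)) + dist (φ (a • z)) (φ (b • z))
            + dist (φ (b • z)) (φ (b • x)) := dist_triangle4 _ _ _ _
      _ ≤ ε/4 + ε/4 + ε/4 := by
          rw [dist_comm (φ (b • z))]
          exact add_le_add (add_le_add h1.le h2.le) h3.le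
      _ = 3*(ε/4) := by ring
  calc dist (Tm a φ) (Tm b φ) ≤ 3*(ε/4) := hd
    _ < ε := by linarith


lemma exists_near_invariant
    (hLyap : ∀ U ∈ uniformity X, ∃ V ∈ uniformity X,
      ∀ (g : Γ) (x y : X), (x, y) ∈ V → (g • x, g • y) ∈ U)
    (φ : C(X, ℂ)) {δ : ℝ} (hδ : 0 < δ) :
    ∃ h ∈ convexHull ℝ (Set.range fun a : Γ => Tm a φ),
      ∀ b : Γ, ‖Tm b h - h‖ ≤ δ := by
  classical
  set S := Set.range fun a : Γ => Tm a φ with hS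
  set hull := convexHull ℝ S with hhull
  have hima : ∀ b : Γ, Tm b '' hull = hull := by
    intro b
    rw [hhull, (Tm_linear b).image_convexHull]
    congr 1
    apply Set.Subset.antisymm
    · rintro _ ⟨_, ⟨a, rfl⟩, rfl⟩
      exact ⟨a * b, (Tm_Tm b a φ).symm⟩
    · rintro _ ⟨a, rfl⟩
      refine ⟨Tm (a * b⁻¹) φ, ⟨a * b⁻¹, rfl⟩, ?_⟩
      rw [Tm_Tm, inv_mul_cancel_right]
  have hullne : hull.Nonempty := ⟨Tm 1 φ, subset_convexHull ℝ S ⟨1, rfl⟩⟩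
  have hullbd : hull ⊆ closedBall 0 ‖φ‖ := by
    apply convexHull_min ?_ (convex_closedBall _ _)
    rintro _ ⟨a, rfl⟩
    simpa [mem_closedBall, dist_eq_norm] using (Tm_norm a φ).le
  have hullTB : TotallyBounded hull := totallyBounded_convexHull.2 (S_totallyBounded hLyap φ)
  have hδ8 : (0:ℝ) < δ/8 := by linarith
  obtain ⟨t0, ht0fin, ht0cov⟩ := Metric.totallyBounded_iff.1 hullTB (δ/8) hδ8
  set tF := ht0fin.toFinset with htF
  have hcov : ∀ x ∈ hull, ∃ p ∈ tF, dist x p < δ/8 := by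
    intro x hx
    have := ht0cov hx
    simp only [Set.mem_iUnion, Metric.mem_ball] at this
    obtain ⟨p, hp, hd⟩ := this
    exact ⟨p, ht0fin.mem_toFinset.2 hp, hd⟩
  set N := tF.card with hNdef
  have hN1 : 1 ≤ N := by
    obtain ⟨x, hx⟩ := hullne
    obtain ⟨p, hp, -⟩ := hcov x hx
    exact Finset.card_pos.2 ⟨p, hp⟩
  have hN0 : (0:ℝ) < N := by exact_mod_cast hN1
  set η := 3 * δ / (4 * N) with hη
  have hη0 : 0 < η := by positivity
  have hηN : η * N = 3 * δ / 4 := by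
    rw [hη]; field_simp
  have key : ∀ n : ℕ, ∀ D : Set C(X, ℂ), D ⊆ hull → D.Nonempty → Convex ℝ D →
      (∀ b : Γ, Tm b '' D = D) → (∀ x ∈ D, ∀ y ∈ D, ‖x - y‖ ≤ δ + n * η) →
      ∃ h ∈ hull, ∀ b : Γ, ‖Tm b h - h‖ ≤ δ := by
    intro n
    induction n with
    | zero =>
      rintro D hDh ⟨h, hh⟩ - hinv hbd
      refine ⟨h, hDh hh, fun b => ?_⟩
      have hb : Tm b h ∈ D := by rw [← hinv b]; exact Set.mem_image_of_mem _ hh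
      simpa using hbd _ hb _ hh
    | succ n ih =>
      intro D hDh hDne hDcx hDinv hDbd
      set d := δ + (n + 1 : ℕ) * η with hd
      have hdδ : δ ≤ d := by
        rw [hd]; push_cast; nlinarith
      have hdη : d - η = δ + n * η := by rw [hd]; push_cast; ring
      -- the set of useful net centers
      set J := tF.filter (fun p => ∃ x ∈ D, dist x p < δ/8) with hJ
      set w : C(X, ℂ) → C(X, ℂ) := fun p =>
        if h : ∃ x ∈ D, dist x p < δ/8 then h.choose else hDne.choose with hw
      have hwD : ∀ p, w p ∈ D := by
        intro p
        rw [hw]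
        by_cases h : ∃ x ∈ D, dist x p < δ/8
        · simp only [dif_pos h]; exact h.choose_spec.1
        · simp only [dif_neg h]; exact hDne.choose_spec
      have hwd : ∀ p ∈ J, dist (w p) p < δ/8 := by
        intro p hp
        rw [hJ, Finset.mem_filter] at hp
        rw [hw]; simp only [dif_pos hp.2]; exact hp.2.choose_spec.2
      set m := J.card with hm
      have hm1 : 1 ≤ m := by
        obtain ⟨x, hx⟩ := hDne
        obtain ⟨p, hp, hdp⟩ := hcov x (hDh hx)
        exact Finset.card_pos.2 ⟨p, by rw [hJ, Finset.mem_filter]; exact ⟨hp, x, hx, hdp⟩⟩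
      have hm0 : (0:ℝ) < m := by exact_mod_cast hm1
      have hmN : (m:ℝ) ≤ N := by
        exact_mod_cast Finset.card_le_card (by rw [hJ]; exact Finset.filter_subset _ _)
      set xbar := ∑ p ∈ J, (m:ℝ)⁻¹ • w p with hxbar
      have hsum1 : ∑ _p ∈ J, (m:ℝ)⁻¹ = 1 := by
        rw [Finset.sum_const, ← hm, nsmul_eq_mul, mul_inv_cancel₀ (ne_of_gt hm0)]
      have hxbarD : xbar ∈ D :=
        hDcx.sum_mem (fun _ _ => by positivity) hsum1 (fun p _ => hwD p)
      have hxbarbd : ∀ y ∈ D, ‖xbar - y‖ ≤ d - η := by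
        intro y hy
        obtain ⟨p₀, hp₀t, hp₀d⟩ := hcov y (hDh hy)
        have hp₀J : p₀ ∈ J := by
          rw [hJ, Finset.mem_filter]; exact ⟨hp₀t, y, hy, hp₀d⟩
        have hyrw : y = ∑ p ∈ J, (m:ℝ)⁻¹ • y := by
          rw [← Finset.sum_smul, hsum1, one_smul]
        have hsplit : xbar - y = ∑ p ∈ J, (m:ℝ)⁻¹ • (w p - y) := by
          rw [hxbar]
          conv_lhs => rw [hyrw]
          rw [← Finset.sum_sub_distrib]
          exact Finset.sum_congr rfl fun p _ => (smul_sub _ _ _).symm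
        have hnorm : ‖xbar - y‖ ≤ ∑ p ∈ J, (m:ℝ)⁻¹ * ‖w p - y‖ := by
          rw [hsplit]
          refine (norm_sum_le _ _).trans (le_of_eq (Finset.sum_congr rfl fun p _ => ?_))
          rw [norm_smul, Real.norm_eq_abs, abs_of_pos (inv_pos.2 hm0)]
        have hterm : ∑ p ∈ J, ‖w p - y‖ ≤ δ/4 + (m - 1) * d := by
          rw [← Finset.add_sum_erase _ _ hp₀J]
          have h1 : ‖w p₀ - y‖ ≤ δ/4 := by
            have := (dist_triangle (w p₀) p₀ y).trans_lt
              (add_lt_add (hwd p₀ hp₀J) (by rwa [dist_comm] at hp₀d))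
            rw [← dist_eq_norm]
            linarith
          have h2 : ∑ p ∈ J.erase p₀, ‖w p - y‖ ≤ (m - 1) * d := by
            have : ∀ p ∈ J.erase p₀, ‖w p - y‖ ≤ d := fun p _ => hDbd _ (hwD p) _ hy
            calc ∑ p ∈ J.erase p₀, ‖w p - y‖ ≤ ∑ _p ∈ J.erase p₀, d :=
                  Finset.sum_le_sum this
              _ = (J.erase p₀).card * d := by rw [Finset.sum_const, nsmul_eq_mul]
              _ = (m - 1) * d := by
                  rw [Finset.card_erase_of_mem hp₀J, ← hm]
                  congr 1
                  have : (1:ℕ) ≤ m := hm1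
                  push_cast [Nat.cast_sub this]
                  ring
          exact add_le_add h1 h2
        have hfin : (m:ℝ)⁻¹ * (δ/4 + (m - 1) * d) ≤ d - η := by
          rw [inv_mul_le_iff₀ hm0]
          have h3 : (m:ℝ) * η ≤ 3 * δ / 4 := by
            calc (m:ℝ) * η ≤ N * η := by nlinarith
              _ = 3 * δ / 4 := by rw [mul_comm]; exact hηN
          nlinarith
        calc ‖xbar - y‖ ≤ ∑ p ∈ J, (m:ℝ)⁻¹ * ‖w p - y‖ := hnorm
          _ = (m:ℝ)⁻¹ * ∑ p ∈ J, ‖w p - y‖ := by rw [Finset.mul_sum]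
          _ ≤ (m:ℝ)⁻¹ * (δ/4 + (m - 1) * d) := by
              apply mul_le_mul_of_nonneg_left hterm (inv_nonneg.2 hm0.le)
          _ ≤ d - η := hfin
      -- the contracted set
      set D' := {x ∈ D | ∀ y ∈ D, ‖x - y‖ ≤ δ + n * η} with hD'
      have hD'sub : D' ⊆ D := fun x hx => hx.1
      have hD'ne : D'.Nonempty := ⟨xbar, hxbarD, fun y hy => hdη ▸ hxbarbd y hy⟩
      have hD'cx : Convex ℝ D' := by
        intro x hx x' hx' a b ha hb hab
        refine ⟨hDcx hx.1 hx'.1 ha hb hab, fun y hy => ?_⟩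
        have hyrw : a • x + b • x' - y = a • (x - y) + b • (x' - y) := by
          have : y = a • y + b • y := by rw [← add_smul, hab, one_smul]
          rw [smul_sub, smul_sub]
          conv_lhs => rw [this]
          abel
        rw [hyrw]
        calc ‖a • (x - y) + b • (x' - y)‖ ≤ ‖a • (x - y)‖ + ‖b • (x' - y)‖ :=
            norm_add_le _ _
          _ = a * ‖x - y‖ + b * ‖x' - y‖ := by
              rw [norm_smul, norm_smul, Real.norm_eq_abs, Real.norm_eq_abs,
                abs_of_nonneg ha, abs_of_nonneg hb]
          _ ≤ a * (δ + n * η) + b * (δ + n * η) := by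
              have := hx.2 y hy; have := hx'.2 y hy
              apply add_le_add <;> apply mul_le_mul_of_nonneg_left <;> first | assumption
          _ = δ + n * η := by rw [← add_mul, hab, one_mul]
      have hD'inv : ∀ b : Γ, Tm b '' D' = D' := by
        intro b
        apply Set.Subset.antisymm
        · rintro _ ⟨x, hx, rfl⟩
          refine ⟨by rw [← hDinv b]; exact Set.mem_image_of_mem _ hx.1, fun y hy => ?_⟩
          have : y ∈ Tm b '' D := by rw [hDinv b]; exact hy
          obtain ⟨y', hy', rfl⟩ := this
          rw [← Tm_sub, Tm_norm]
          exact hx.2 y' hy'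
        · intro x hx
          refine ⟨Tm b⁻¹ x, ⟨?_, fun y hy => ?_⟩, by rw [Tm_Tm, inv_mul_cancel, Tm_one]⟩
          · rw [← hDinv b⁻¹]; exact Set.mem_image_of_mem _ hx.1
          · have hby : Tm b y ∈ D := by rw [← hDinv b]; exact Set.mem_image_of_mem _ hy
            have : ‖Tm b⁻¹ x - y‖ = ‖Tm b (Tm b⁻¹ x - y)‖ := (Tm_norm b _).symm
            rw [this, Tm_sub, Tm_Tm, inv_mul_cancel, Tm_one]
            exact hx.2 _ hby
      exact ih D' (hD'sub.trans hDh) hD'ne hD'cx hD'inv (fun x hx y hy => hx.2 y hy.1)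
  obtain ⟨n, hn⟩ := exists_nat_ge ((2 * ‖φ‖) / η)
  refine key n hull Set.Subset.rfl hullne (convex_convexHull ℝ S) hima ?_
  intro x hx y hy
  have hxb : ‖x‖ ≤ ‖φ‖ := by simpa [mem_closedBall, dist_eq_norm] using hullbd hx
  have hyb : ‖y‖ ≤ ‖φ‖ := by simpa [mem_closedBall, dist_eq_norm] using hullbd hy
  have h2 : 2 * ‖φ‖ ≤ n * η := by
    rwa [div_le_iff₀ hη0] at hn
  calc ‖x - y‖ ≤ ‖x‖ + ‖y‖ := norm_sub_le _ _
    _ ≤ 2 * ‖φ‖ := by linarith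
    _ ≤ δ + n * η := by linarith

end Aux


open Metric Set

/-- For a Lyapunov stable action on a compact Hausdorff space, if `x₂` lies in the closure of
the orbit of `x₁`, then `φ_{x₂}` is, up to a shift, uniformly close to `φ_{x₁}`; consequently
every left-invariant mean on bounded functions on `Γ` gives `φ_{x₁}` and `φ_{x₂}` the same
average. -/
theorem stmt3 {Γ X : Type*} [Group Γ] [UniformSpace X] [CompactSpace X] [T2Space X]
    [MulAction Γ X] [ContinuousConstSMul Γ X]
    (hLyap : ∀ U ∈ uniformity X, ∃ V ∈ uniformity X,
      ∀ (g : Γ) (x y : X), (x, y) ∈ V → (g • x, g • y) ∈ U)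
    (x₁ x₂ : X) (hx : x₂ ∈ closure (MulAction.orbit Γ x₁)) (φ : C(X, ℂ)) :
    (∀ ε > 0, ∃ g : Γ, ∀ h : Γ, ‖φ (h • x₁) - φ ((h * g) • x₂)‖ < ε) ∧
    ∀ M : (Γ → ℂ) → ℂ,
      (∀ f₁ f₂ : Γ → ℂ, (∃ C, ∀ g, ‖f₁ g‖ ≤ C) → (∃ C, ∀ g, ‖f₂ g‖ ≤ C) →
        M (f₁ + f₂) = M f₁ + M f₂) →
      (∀ (c : ℂ) (f : Γ → ℂ), (∃ C, ∀ g, ‖f g‖ ≤ C) → M (c • f) = c * M f) →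
      (M (fun _ => 1) = 1) →
      (∀ (f : Γ → ℂ) (C : ℝ), (∀ g, ‖f g‖ ≤ C) → ‖M f‖ ≤ C) →
      (∀ (f : Γ → ℂ) (h : Γ), (∃ C, ∀ g, ‖f g‖ ≤ C) → M (fun g => f (h * g)) = M f) →
      M (fun g => φ (g • x₁)) = M (fun g => φ (g • x₂)) := by
  constructor
  · -- Part 1
    intro ε hε
    have hφu : UniformContinuous φ := CompactSpace.uniformContinuous_of_continuous φ.continuous
    have hU : {p : X × X | dist (φ p.1) (φ p.2) < ε} ∈ uniformity X :=
      hφu (Metric.dist_mem_uniformity hε)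
    obtain ⟨V, hV, hVU⟩ := hLyap _ hU
    obtain ⟨y, hyV, hyO⟩ := mem_closure_iff_nhds.1 hx _ (UniformSpace.ball_mem_nhds x₂ hV)
    obtain ⟨k, rfl⟩ := hyO
    refine ⟨k⁻¹, fun h => ?_⟩
    have hmem := hVU (h * k⁻¹) x₂ (k • x₁) hyV
    have he : (h * k⁻¹) • (k • x₁) = h • x₁ := by
      rw [smul_smul, inv_mul_cancel_right]
    rw [he] at hmem
    have : dist (φ ((h * k⁻¹) • x₂)) (φ (h • x₁)) < ε := hmem
    rw [← dist_eq_norm, dist_comm]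
    exact this
  · -- Part 2
    intro M hadd hsmul hone hbound hinv
    -- `M` of a function uniformly close to a constant is close to that constant
    have hconst : ∀ c : ℂ, M (fun _ => c) = c := by
      intro c
      have h1 := hsmul c (fun _ => (1:ℂ)) ⟨1, fun g => by norm_num⟩
      have h2 : (c • fun _ : Γ => (1:ℂ)) = fun _ => c := by funext g; simp
      rw [h2, hone, mul_one] at h1
      exact h1
    have hMclose : ∀ (f : Γ → ℂ) (C : ℝ), (∀ g, ‖f g‖ ≤ C) →
        ∀ (c : ℂ) (ε : ℝ), (∀ g, ‖f g - c‖ ≤ ε) → ‖M f - c‖ ≤ ε := by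
      intro f C hC c ε hfc
      have h3 := hadd (fun g => f g - c) (fun _ => c)
        ⟨C + ‖c‖, fun g => (norm_sub_le _ _).trans (add_le_add (hC g) le_rfl)⟩
        ⟨‖c‖, fun _ => le_rfl⟩
      have h4 : ((fun g => f g - c) + fun _ => c) = f := by funext g; simp
      rw [h4, hconst c] at h3
      have h5 : M f - c = M (fun g => f g - c) := by rw [h3, add_sub_cancel_right]
      rw [h5]
      exact hbound _ ε hfc
    set α := M (fun g => φ (g • x₁)) with hα
    set β := M (fun g => φ (g • x₂)) with hβ
    -- The set of continuous functions whose orbital averages agree with those of φ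
    set G : Set C(X, ℂ) := {χ | M (fun g => χ (g • x₁)) = α ∧ M (fun g => χ (g • x₂)) = β}
      with hG
    have hGconv : Convex ℝ G := by
      intro χ hχ χ' hχ' a b ha hb hab
      have habℂ : (a:ℂ) + (b:ℂ) = 1 := by exact_mod_cast hab
      have key : ∀ (x : X), M (fun g => χ (g • x)) = M (fun g => χ' (g • x)) →
          ∀ γ : ℂ, M (fun g => χ (g • x)) = γ →
          M (fun g => (a • χ + b • χ') (g • x)) = γ := by
        intro x hxx γ hγ
        have hb1 : ∃ C, ∀ g : Γ, ‖χ (g • x)‖ ≤ C := ⟨‖χ‖, fun g => χ.norm_coe_le_norm _⟩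
        have hb2 : ∃ C, ∀ g : Γ, ‖χ' (g • x)‖ ≤ C := ⟨‖χ'‖, fun g => χ'.norm_coe_le_norm _⟩
        have e1 := hsmul (a:ℂ) (fun g => χ (g • x)) hb1
        have e2 := hsmul (b:ℂ) (fun g => χ' (g • x)) hb2
        have e3 := hadd ((a:ℂ) • fun g => χ (g • x)) ((b:ℂ) • fun g => χ' (g • x))
          ⟨‖(a:ℂ)‖ * ‖χ‖, fun g => by
            simp only [Pi.smul_apply, smul_eq_mul, norm_mul]
            exact mul_le_mul_of_nonneg_left (χ.norm_coe_le_norm _) (norm_nonneg _)⟩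
          ⟨‖(b:ℂ)‖ * ‖χ'‖, fun g => by
            simp only [Pi.smul_apply, smul_eq_mul, norm_mul]
            exact mul_le_mul_of_nonneg_left (χ'.norm_coe_le_norm _) (norm_nonneg _)⟩
        have e4 : (fun g : Γ => (a • χ + b • χ') (g • x))
            = ((a:ℂ) • fun g : Γ => χ (g • x)) + ((b:ℂ) • fun g : Γ => χ' (g • x)) := by
          funext g
          simp [Complex.real_smul]
        rw [e4, e3, e1, e2, hγ, ← hxx, hγ, ← add_mul, habℂ, one_mul]
      exact ⟨key x₁ (by rw [hχ.1, hχ'.1]) α hχ.1, key x₂ (by rw [hχ.2, hχ'.2]) β hχ.2⟩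
    have hSG : (Set.range fun a : Γ => Tm a φ) ⊆ G := by
      rintro _ ⟨a, rfl⟩
      constructor
      · have : (fun g : Γ => (Tm a φ) (g • x₁)) = fun g => φ ((a * g) • x₁) := by
          funext g; rw [Tm_apply, mul_smul]
        rw [this, hinv (fun g => φ (g • x₁)) a ⟨‖φ‖, fun g => φ.norm_coe_le_norm _⟩]
      · have : (fun g : Γ => (Tm a φ) (g • x₂)) = fun g => φ ((a * g) • x₂) := by
          funext g; rw [Tm_apply, mul_smul]
        rw [this, hinv (fun g => φ (g • x₂)) a ⟨‖φ‖, fun g => φ.norm_coe_le_norm _⟩]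
    have hhullG : convexHull ℝ (Set.range fun a : Γ => Tm a φ) ⊆ G :=
      convexHull_min hSG hGconv
    -- main estimate
    have main : ∀ δ : ℝ, 0 < δ → ‖α - β‖ ≤ 2 * δ := by
      intro δ hδ
      obtain ⟨h, hhull, hhinv⟩ := exists_near_invariant hLyap φ hδ
      obtain ⟨hh1, hh2⟩ := hhullG hhull
      set c := h x₁ with hc
      -- points of the orbit closure have h-value close to c
      have horb : ∀ y ∈ closure (MulAction.orbit Γ x₁), ‖h y - c‖ ≤ δ := by
        intro y hy
        have hclosed : IsClosed {y : X | ‖h y - c‖ ≤ δ} :=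
          isClosed_le (by continuity) continuous_const
        have hsub : MulAction.orbit Γ x₁ ⊆ {y : X | ‖h y - c‖ ≤ δ} := by
          rintro _ ⟨b, rfl⟩
          show ‖h (b • x₁) - c‖ ≤ δ
          have h6 : ‖(Tm b h - h) x₁‖ ≤ ‖Tm b h - h‖ :=
            ContinuousMap.norm_coe_le_norm _ _
          simp only [ContinuousMap.sub_apply, Tm_apply] at h6
          exact le_trans h6 (hhinv b)
        exact closure_minimal hsub hclosed hy
      have hbd1 : ‖α - c‖ ≤ δ := by
        rw [← hh1]
        refine hMclose _ ‖h‖ (fun g => h.norm_coe_le_norm _) c δ fun g => ?_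
        exact horb _ (subset_closure (MulAction.mem_orbit x₁ g))
      have hbd2 : ‖β - c‖ ≤ δ := by
        rw [← hh2]
        refine hMclose _ ‖h‖ (fun g => h.norm_coe_le_norm _) c δ fun g => ?_
        refine horb _ ?_
        have hsub : (fun y : X => g • y) '' (MulAction.orbit Γ x₁) ⊆ MulAction.orbit Γ x₁ := by
          rintro _ ⟨_, ⟨k, rfl⟩, rfl⟩
          exact ⟨g * k, by simp [mul_smul]⟩
        have := (image_closure_subset_closure_image (continuous_const_smul g))
          (Set.mem_image_of_mem _ hx)
        exact closure_mono hsub this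
      calc ‖α - β‖ = ‖(α - c) - (β - c)‖ := by ring_nf
        _ ≤ ‖α - c‖ + ‖β - c‖ := norm_sub_le _ _
        _ ≤ 2 * δ := by linarith
    have : ‖α - β‖ ≤ 0 := by
      refine le_of_forall_pos_le_add fun ε hε => ?_
      have := main (ε / 4) (by linarith)
      linarith
    have := le_antisymm this (norm_nonneg _)
    rwa [norm_eq_zero, sub_eq_zero] at this
end

section
/- Let a group Γ act by homeomorphisms on a compact Hausdorff space X, with the action Lyapunov stable. Then any two orbits either have equal closures or disjoint closures: for x, y ∈ X, either closure(Γ•x) = closure(Γ•y) or closure(Γ•x) ∩ closure(Γ•y) = ∅. -/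
open UniformSpace Pointwise in
private lemma key {Γ X : Type*} [Group Γ] [UniformSpace X]
    [MulAction Γ X] [ContinuousConstSMul Γ X]
    (hLyap : ∀ U ∈ uniformity X, ∃ V ∈ uniformity X,
      ∀ (g : Γ) (x y : X), (x, y) ∈ V → (g • x, g • y) ∈ U)
    {x z : X} (hz : z ∈ closure (MulAction.orbit Γ x)) :
    x ∈ closure (MulAction.orbit Γ z) := by
  rw [UniformSpace.mem_closure_iff_ball]
  intro U hU
  obtain ⟨V, hV, hVU⟩ := hLyap (SetRel.symmetrize U) (symmetrize_mem_uniformity hU)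
  obtain ⟨w, hw1, g, hg⟩ := (UniformSpace.mem_closure_iff_ball.mp hz) hV
  -- hw1 : w ∈ ball z V, hg : g • x = w
  have h1 : (g⁻¹ • z, g⁻¹ • w) ∈ SetRel.symmetrize U := hVU g⁻¹ z w hw1
  refine ⟨g⁻¹ • z, ?_, ⟨g⁻¹, rfl⟩⟩
  have : g⁻¹ • w = x := by rw [← hg, inv_smul_smul]
  rw [this] at h1
  exact SetRel.symmetrize_subset_inv h1

open Pointwise in
/-- Orbit-closure dichotomy for Lyapunov stable actions on compact Hausdorff spaces:
any two orbits have either equal or disjoint closures. -/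
theorem stmt4 {Γ X : Type*} [Group Γ] [UniformSpace X] [CompactSpace X] [T2Space X]
    [MulAction Γ X] [ContinuousConstSMul Γ X]
    (hLyap : ∀ U ∈ uniformity X, ∃ V ∈ uniformity X,
      ∀ (g : Γ) (x y : X), (x, y) ∈ V → (g • x, g • y) ∈ U)
    (x y : X) :
    closure (MulAction.orbit Γ x) = closure (MulAction.orbit Γ y) ∨
      closure (MulAction.orbit Γ x) ∩ closure (MulAction.orbit Γ y) = ∅ := by
  rcases Set.eq_empty_or_nonempty
      (closure (MulAction.orbit Γ x) ∩ closure (MulAction.orbit Γ y)) with h | ⟨z, hzx, hzy⟩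
  · exact Or.inr h
  left
  have main : ∀ a b z : X, z ∈ closure (MulAction.orbit Γ a) →
      z ∈ closure (MulAction.orbit Γ b) →
      closure (MulAction.orbit Γ a) ⊆ closure (MulAction.orbit Γ b) := by
    intro a b z hza hzb
    have hab : a ∈ closure (MulAction.orbit Γ b) := by
      have h1 : a ∈ closure (MulAction.orbit Γ z) := key hLyap hza
      have h2 : MulAction.orbit Γ z ⊆ closure (MulAction.orbit Γ b) := by
        rintro _ ⟨g, rfl⟩
        have : g • z ∈ g • closure (MulAction.orbit Γ b) := Set.smul_mem_smul_set hzb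
        rwa [← closure_smul, MulAction.smul_orbit] at this
      exact closure_minimal h2 isClosed_closure h1
    have : MulAction.orbit Γ a ⊆ closure (MulAction.orbit Γ b) := by
      rintro _ ⟨g, rfl⟩
      have : g • a ∈ g • closure (MulAction.orbit Γ b) := Set.smul_mem_smul_set hab
      rwa [← closure_smul, MulAction.smul_orbit] at this
    exact closure_minimal this isClosed_closure
  exact le_antisymm (main x y z hzx hzy) (main y x z hzy hzx)
end

section
/- Let a group Γ act by homeomorphisms on a compact Hausdorff space X, Lyapunov stably. Then the quotient space X/∼, where x ∼ y iff closure(Γ•x) = closure(Γ•y), equipped with the quotient topology, is Hausdorff. -/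
open MulAction Set UniformSpace

/-- The equivalence relation identifying points with equal orbit closures. -/
def orbitClosureSetoid (Γ X : Type*) [Group Γ] [MulAction Γ X] [TopologicalSpace X] :
    Setoid X :=
  ⟨fun x y => closure (MulAction.orbit Γ x) = closure (MulAction.orbit Γ y),
    ⟨fun _ => rfl, Eq.symm, Eq.trans⟩⟩

section aux
variable {Γ X : Type*} [Group Γ] [UniformSpace X] [MulAction Γ X] [ContinuousConstSMul Γ X]

/-- Invariant symmetric entourages form a base of the uniformity. -/
lemma exists_invariant_entourage
    (hLyap : ∀ U ∈ uniformity X, ∃ V ∈ uniformity X,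
      ∀ (g : Γ) (x y : X), (x, y) ∈ V → (g • x, g • y) ∈ U)
    {U : Set (X × X)} (hU : U ∈ uniformity X) :
    ∃ W ∈ uniformity X, W ⊆ U ∧ (∀ x y : X, (x, y) ∈ W → (y, x) ∈ W) ∧
      ∀ (g : Γ) (x y : X), (x, y) ∈ W → (g • x, g • y) ∈ W := by
  obtain ⟨S, hS, hSsymm, hSU⟩ : ∃ S ∈ uniformity X, SetRel.IsSymm S ∧ S ⊆ U :=
    ⟨SetRel.symmetrize U, symmetrize_mem_uniformity hU, inferInstance,
      SetRel.symmetrize_subset_self⟩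
  obtain ⟨V, hV, hVS⟩ := hLyap S hS
  refine ⟨{p : X × X | ∀ g : Γ, (g • p.1, g • p.2) ∈ S}, ?_, ?_, ?_, ?_⟩
  · exact Filter.mem_of_superset hV fun p hp => fun g => hVS g p.1 p.2 hp
  · intro p hp
    have := hp 1
    simpa using hSU (by simpa using this)
  · intro x y h g
    exact hSsymm.symm _ _ (h g)
  · intro g x y h h'
    have := h (h' * g)
    simpa [mul_smul] using this

/-- Membership in orbit closure is symmetric for Lyapunov stable actions. -/
lemma mem_closure_orbit_symm
    (hLyap : ∀ U ∈ uniformity X, ∃ V ∈ uniformity X,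
      ∀ (g : Γ) (x y : X), (x, y) ∈ V → (g • x, g • y) ∈ U)
    {x y : X} (h : y ∈ closure (orbit Γ x)) : x ∈ closure (orbit Γ y) := by
  rw [mem_closure_iff_ball] at h ⊢
  intro V hV
  obtain ⟨W, hW, hWV, hWsymm, hWinv⟩ := exists_invariant_entourage hLyap hV
  obtain ⟨z, hz1, hz2⟩ := h hW
  obtain ⟨g, rfl⟩ := hz2
  refine ⟨g⁻¹ • y, hWV ?_, ⟨g⁻¹, rfl⟩⟩
  have := hWinv g⁻¹ y (g • x) hz1
  simpa using hWsymm _ _ this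

/-- Orbit closures are invariant, so membership forces inclusion of closures. -/
lemma closure_orbit_subset {x y : X} (h : y ∈ closure (orbit Γ x)) :
    closure (orbit Γ y) ⊆ closure (orbit Γ x) := by
  apply closure_minimal _ isClosed_closure
  rintro _ ⟨g, rfl⟩
  have : g • y ∈ (g • ·) '' closure (orbit Γ x) := ⟨y, h, rfl⟩
  have h2 : (g • ·) '' closure (orbit Γ x) ⊆ closure ((g • ·) '' (orbit Γ x)) :=
    image_closure_subset_closure_image (continuous_const_smul g)
  have h3 : (g • ·) '' (orbit Γ x) = orbit Γ x := by
    have := smul_orbit (G := Γ) g x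
    simpa [Set.image_smul] using this
  rw [h3] at h2
  exact h2 this

lemma rel_iff_mem_closure
    (hLyap : ∀ U ∈ uniformity X, ∃ V ∈ uniformity X,
      ∀ (g : Γ) (x y : X), (x, y) ∈ V → (g • x, g • y) ∈ U)
    (x y : X) :
    (orbitClosureSetoid Γ X).r x y ↔ y ∈ closure (orbit Γ x) := by
  constructor
  · intro h
    have : y ∈ closure (orbit Γ y) := subset_closure (mem_orbit_self y)
    rwa [show closure (orbit Γ y) = closure (orbit Γ x) from h.symm] at this
  · intro h
    show closure (orbit Γ x) = closure (orbit Γ y)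
    exact le_antisymm (closure_orbit_subset (mem_closure_orbit_symm hLyap h))
      (closure_orbit_subset h)

lemma rel_closed
    (hLyap : ∀ U ∈ uniformity X, ∃ V ∈ uniformity X,
      ∀ (g : Γ) (x y : X), (x, y) ∈ V → (g • x, g • y) ∈ U) :
    IsClosed {p : X × X | p.2 ∈ closure (orbit Γ p.1)} := by
  have hsub : closure {p : X × X | p.2 ∈ closure (orbit Γ p.1)} ⊆
      {p : X × X | p.2 ∈ closure (orbit Γ p.1)} := by
    intro p hp
    rw [Set.mem_setOf_eq, mem_closure_iff_ball]
    intro V hV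
    obtain ⟨W2, hW2, hW2symm, hW2V⟩ := comp_symm_mem_uniformity_sets hV
    obtain ⟨W3, hW3, hW3symm, hW3W2⟩ := comp_symm_mem_uniformity_sets hW2
    obtain ⟨W, hW, hWsub, hWsymm, hWinv⟩ := exists_invariant_entourage hLyap hW3
    have hnhds : ball p.1 W ×ˢ ball p.2 W ∈ nhds p := by
      have hp' : p = (p.1, p.2) := rfl
      rw [hp', nhds_prod_eq]
      exact Filter.prod_mem_prod (ball_mem_nhds p.1 hW) (ball_mem_nhds p.2 hW)
    rw [mem_closure_iff_nhds] at hp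
    obtain ⟨q, hq1, hq2⟩ := hp _ hnhds
    obtain ⟨hq11, hq12⟩ := hq1
    rw [Set.mem_setOf_eq, mem_closure_iff_ball] at hq2
    obtain ⟨z, hz1, hz2⟩ := hq2 hW
    obtain ⟨g, rfl⟩ := hz2
    -- (p.2, q.2) ∈ W, (q.2, g•q.1) ∈ W, (g•q.1, g•p.1) ∈ W
    have h1 : (p.2, q.2) ∈ W := hq12
    have h2 : (q.2, g • q.1) ∈ W := hz1
    have h3 : (g • q.1, g • p.1) ∈ W := hWinv g _ _ (hWsymm _ _ hq11)
    have hW3W2' : W3 ⊆ W2 := fun pq hpq => by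
      have : (pq.1, pq.2) ∈ SetRel.comp W3 W3 := ⟨pq.2, hpq, refl_mem_uniformity hW3⟩
      exact hW3W2 this
    refine ⟨g • p.1, ?_, ⟨g, rfl⟩⟩
    apply hW2V
    exact ⟨g • q.1, hW3W2 ⟨q.2, hWsub h1, hWsub h2⟩, hW3W2' (hWsub h3)⟩
  exact isClosed_of_closure_subset hsub

end aux

/-- For a Lyapunov stable action on a compact Hausdorff space, the quotient by the relation
"equal orbit closures", with the quotient topology, is Hausdorff. -/
theorem stmt5 {Γ X : Type*} [Group Γ] [UniformSpace X] [CompactSpace X] [T2Space X]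
    [MulAction Γ X] [ContinuousConstSMul Γ X]
    (hLyap : ∀ U ∈ uniformity X, ∃ V ∈ uniformity X,
      ∀ (g : Γ) (x y : X), (x, y) ∈ V → (g • x, g • y) ∈ U) :
    T2Space (Quotient (orbitClosureSetoid Γ X)) := by
  letI s := orbitClosureSetoid Γ X
  have hopen : IsOpenMap (Quotient.mk s) := by
    intro A hA
    have hpre : (Quotient.mk s) ⁻¹' ((Quotient.mk s) '' A) = ⋃ g : Γ, (g • ·) ⁻¹' A := by
      ext z
      simp only [Set.mem_preimage, Set.mem_image, Set.mem_iUnion]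
      constructor
      · rintro ⟨a, ha, hq⟩
        have hrel : s.r a z := Quotient.exact hq
        have hmem : a ∈ closure (orbit Γ z) :=
          (rel_iff_mem_closure hLyap z a).mp (s.symm hrel)
        rw [mem_closure_iff] at hmem
        obtain ⟨w, hwA, hworbit⟩ := hmem A hA ha
        obtain ⟨g, rfl⟩ := hworbit
        exact ⟨g, hwA⟩
      · rintro ⟨g, hg⟩
        refine ⟨g • z, hg, Quotient.sound ?_⟩
        show closure (orbit Γ (g • z)) = closure (orbit Γ z)
        rw [orbit_smul]
    have : IsOpen ((Quotient.mk s) ⁻¹' ((Quotient.mk s) '' A)) := by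
      rw [hpre]
      exact isOpen_iUnion fun g => hA.preimage (continuous_const_smul g)
    exact isQuotientMap_quotient_mk'.isOpen_preimage.mp this
  have hR : IsClosed {p : X × X | p.2 ∈ closure (orbit Γ p.1)} := rel_closed hLyap
  have hopen2 : IsOpenMap (Prod.map (Quotient.mk s) (Quotient.mk s)) := hopen.prodMap hopen
  rw [t2_iff_isClosed_diagonal, ← isOpen_compl_iff]
  have hcompl : (Set.diagonal (Quotient s))ᶜ =
      Prod.map (Quotient.mk s) (Quotient.mk s) '' {p : X × X | p.2 ∈ closure (orbit Γ p.1)}ᶜ := by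
    apply Set.eq_of_subset_of_subset
    · rintro ⟨a, b⟩ h
      obtain ⟨x, rfl⟩ := Quotient.exists_rep a
      obtain ⟨y, rfl⟩ := Quotient.exists_rep b
      refine ⟨(x, y), fun hmem => ?_, rfl⟩
      exact h (Quotient.sound ((rel_iff_mem_closure hLyap x y).mpr hmem))
    · rintro q ⟨⟨x, y⟩, hmem, rfl⟩
      intro hd
      exact hmem ((rel_iff_mem_closure hLyap x y).mp (Quotient.exact hd))
  rw [hcompl]
  exact hopen2 _ hR.isOpen_compl
end

section
/- Let a group Γ act by homeomorphisms on a compact Hausdorff space X, Lyapunov stably, and suppose there is a uniform bound N on the cardinality of all finite orbits. Then the set X_f of all points with finite orbit is a closed (and Γ-invariant) subset of X. -/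
/-- For a Lyapunov stable action on a compact Hausdorff space with a uniform bound `N` on the
cardinality of finite orbits, the set of points with finite orbit is closed and Γ-invariant. -/
theorem stmt6 {Γ X : Type*} [Group Γ] [UniformSpace X] [CompactSpace X] [T2Space X]
    [MulAction Γ X] [ContinuousConstSMul Γ X]
    (hLyap : ∀ U ∈ uniformity X, ∃ V ∈ uniformity X,
      ∀ (g : Γ) (x y : X), (x, y) ∈ V → (g • x, g • y) ∈ U)
    (N : ℕ)
    (hN : ∀ x : X, (MulAction.orbit Γ x).Finite → Nat.card (MulAction.orbit Γ x) ≤ N) :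
    IsClosed {x : X | (MulAction.orbit Γ x).Finite} ∧
      ∀ (g : Γ) (x : X), (MulAction.orbit Γ x).Finite → (MulAction.orbit Γ (g • x)).Finite := by
  constructor
  · apply isClosed_of_closure_subset
    intro x hx
    by_contra hinf
    have hinf' : (MulAction.orbit Γ x).Infinite := hinf
    obtain ⟨t, hts, htc⟩ := hinf'.exists_subset_card_eq (N + 1)
    -- separating entourages for every pair of distinct points
    have key : ∀ a b : X, ∃ V ∈ uniformity X, a ≠ b → (a, b) ∉ V := by
      intro a b
      by_cases hab : a = b
      · exact ⟨Set.univ, Filter.univ_mem, fun h => absurd hab h⟩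
      · by_contra h
        push_neg at h
        exact hab (eq_of_uniformity fun {V} hV => (h V hV).2)
    choose E hE hE' using key
    set U : Set (X × X) := ⋂ p ∈ (t ×ˢ t), E p.1 p.2 with hUdef
    have hU : U ∈ uniformity X :=
      (Filter.biInter_finset_mem _).mpr fun p _ => hE p.1 p.2
    obtain ⟨W, hW, hWsymm, hWU⟩ := comp_symm_mem_uniformity_sets hU
    obtain ⟨V, hV, hVW⟩ := hLyap W hW
    -- find y in X_f close to x
    have hball : {y : X | (x, y) ∈ V} ∈ nhds x := UniformSpace.ball_mem_nhds x hV
    obtain ⟨y, hyV, hyfin⟩ := (mem_closure_iff_nhds.mp hx _ hball)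
    -- write elements of t as g • x
    have hmem : ∀ a ∈ t, ∃ g : Γ, g • x = a := fun a ha =>
      MulAction.mem_orbit_iff.mp (hts ha)
    choose g hg using hmem
    classical
    set G : X → Γ := fun a => if ha : a ∈ t then g a ha else 1 with hGdef
    have hGx : ∀ a ∈ t, G a • x = a := by
      intro a ha
      simp only [hGdef, dif_pos ha]
      exact hg a ha
    -- pigeonhole into the finite orbit of y
    have hcard : hyfin.toFinset.card ≤ N := by
      have h1 : (MulAction.orbit Γ y).ncard = hyfin.toFinset.card :=
        Set.ncard_eq_toFinset_card _ hyfin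
      have h2 : Nat.card (MulAction.orbit Γ y) = (MulAction.orbit Γ y).ncard :=
        Nat.card_coe_set_eq _
      rw [← h1, ← h2]
      exact hN y hyfin
    have hmaps : ∀ a ∈ t, G a • y ∈ hyfin.toFinset := by
      intro a _
      simp only [Set.Finite.mem_toFinset]
      exact MulAction.mem_orbit y (G a)
    have hlt : hyfin.toFinset.card < t.card := by omega
    obtain ⟨a, ha, b, hb, hab, heq⟩ :=
      Finset.exists_ne_map_eq_of_card_lt_of_maps_to hlt hmaps
    -- both a and b are W-close to the same point, hence (a,b) ∈ W ∘ W ⊆ U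
    have hW1 : (a, G a • y) ∈ W := by
      have := hVW (G a) x y hyV
      rwa [hGx a ha] at this
    have hW2 : (b, G b • y) ∈ W := by
      have := hVW (G b) x y hyV
      rwa [hGx b hb] at this
    have habU : (a, b) ∈ U := hWU ⟨G a • y, hW1, by rw [heq]; exact hWsymm.symm _ _ hW2⟩
    have : (a, b) ∈ E a b := by
      have := Set.mem_iInter₂.mp habU (a, b) (Finset.mem_product.mpr ⟨ha, hb⟩)
      exact this
    exact hE' a b hab this
  · intro gg x h
    rwa [MulAction.orbit_smul]
end

section
/- Let a group Γ act by homeomorphisms on a compact Hausdorff space X, Lyapunov stably, and suppose the orbit of a point a ∈ X is dense in X. Then for every nonempty open set B ⊆ X, the union of the translates g•B over g ∈ Γ is all of X, and by compactness there exist finitely many g₁,…,g_n ∈ Γ with X = g₁•B ∪ … ∪ g_n•B. -/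
open Pointwise

/-- For a Lyapunov stable action on a compact Hausdorff space with a dense orbit, the translates
of any nonempty open set cover the whole space, and finitely many translates suffice. -/
theorem stmt7 {Γ X : Type*} [Group Γ] [UniformSpace X] [CompactSpace X] [T2Space X]
    [MulAction Γ X] [ContinuousConstSMul Γ X]
    (hLyap : ∀ U ∈ uniformity X, ∃ V ∈ uniformity X,
      ∀ (g : Γ) (x y : X), (x, y) ∈ V → (g • x, g • y) ∈ U)
    (a : X) (ha : closure (MulAction.orbit Γ a) = Set.univ)
    (B : Set X) (hBopen : IsOpen B) (hBne : B.Nonempty) :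
    (⋃ g : Γ, g • B) = Set.univ ∧
      ∃ s : Finset Γ, (⋃ g ∈ s, g • B) = Set.univ := by
  have hdense : Dense (MulAction.orbit Γ a) := by
    rw [dense_iff_closure_eq]; exact ha
  -- minimality: every orbit is dense
  have hmin : ∀ x : X, Dense (MulAction.orbit Γ x) := by
    intro x y
    rw [mem_closure_iff_nhds]
    intro t ht
    rcases UniformSpace.mem_nhds_iff.1 ht with ⟨U, hU, hUt⟩
    rcases comp_symm_mem_uniformity_sets hU with ⟨W, hW, hWsymm, hWU⟩
    rcases hLyap W hW with ⟨V, hV, hVlyap⟩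
    have hV₁ : SetRel.symmetrize V ∈ uniformity X := symmetrize_mem_uniformity hV
    -- find g with (x, g•a) ∈ symmetrizeRel V
    obtain ⟨z, hz1, g, hg⟩ :=
      mem_closure_iff_nhds.1 (hdense x) _ (UniformSpace.ball_mem_nhds x hV₁)
    -- find k with (y, k•a) ∈ W
    obtain ⟨w, hw1, k, hk⟩ :=
      mem_closure_iff_nhds.1 (hdense y) _ (UniformSpace.ball_mem_nhds y hW)
    subst hg; subst hk
    have hxg : (g • a, x) ∈ V := (SetRel.symmetrize_subset_self (R := V)) ((SetRel.comm (R := SetRel.symmetrize V)).1 hz1)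
    have h2 : ((k * g⁻¹) • (g • a), (k * g⁻¹) • x) ∈ W := hVlyap _ _ _ hxg
    rw [smul_smul, inv_mul_cancel_right] at h2
    refine ⟨(k * g⁻¹) • x, hUt ?_, MulAction.mem_orbit _ _⟩
    exact hWU ⟨k • a, hw1, h2⟩
  have hcover : (⋃ g : Γ, g • B) = Set.univ := by
    ext x
    simp only [Set.mem_iUnion, Set.mem_univ, iff_true]
    obtain ⟨z, hzorb, hzB⟩ := (hmin x).exists_mem_open hBopen hBne
    obtain ⟨g, rfl⟩ := hzorb
    exact ⟨g⁻¹, by rw [Set.mem_inv_smul_set_iff]; exact hzB⟩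
  refine ⟨hcover, ?_⟩
  obtain ⟨s, hs⟩ := isCompact_univ.elim_finite_subcover (fun g : Γ => g • B)
    (fun g => hBopen.smul g) (by rw [hcover])
  exact ⟨s, Set.eq_univ_of_univ_subset hs⟩
end

section
/- Let a group Γ act by homeomorphisms on a compact Hausdorff space X, Lyapunov stably, with a dense orbit. Then any two Γ-invariant regular Borel probability measures on X coincide. -/
open MeasureTheory Set Filter Topology Uniformity

set_option linter.unusedSectionVars false

namespace Stmt8Aux

variable {Γ X : Type*} [Group Γ] [UniformSpace X] [CompactSpace X] [T2Space X]
  [MulAction Γ X] [ContinuousConstSMul Γ X]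

/-- The action map of a single group element. -/
def phi (Γ : Type*) {X : Type*} [SMul Γ X] (g : Γ) : X → X := fun x => g • x

/-- The closure (in the product topology on `X → X`) of the set of action maps. -/
def P (Γ X : Type*) [SMul Γ X] [TopologicalSpace X] : Set (X → X) :=
  closure (Set.range (phi Γ (X := X)))

theorem phi_mem (g : Γ) : phi Γ g ∈ P Γ X := subset_closure ⟨g, rfl⟩

theorem id_mem : (id : X → X) ∈ P Γ X := by
  have : phi Γ (1 : Γ) = (id : X → X) := funext fun x => one_smul Γ x
  rw [← this]; exact phi_mem 1

/-- Existence of closed, symmetric, `Γ`-invariant entourages inside any entourage. -/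
theorem exists_invEnt
    (hLyap : ∀ U ∈ uniformity X, ∃ V ∈ uniformity X,
      ∀ (g : Γ) (x y : X), (x, y) ∈ V → (g • x, g • y) ∈ U)
    {U : Set (X × X)} (hU : U ∈ 𝓤 X) :
    ∃ W ∈ 𝓤 X, W ⊆ U ∧ IsClosed W ∧ (∀ x y : X, (x, y) ∈ W → (y, x) ∈ W) ∧
      ∀ (g : Γ) (x y : X), (x, y) ∈ W → (g • x, g • y) ∈ W := by
  obtain ⟨U₀, ⟨hU₀, hU₀c⟩, hU₀U⟩ := uniformity_hasBasis_closed.mem_iff.1 hU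
  set U₁ : Set (X × X) := U₀ ∩ Prod.swap ⁻¹' U₀ with hU₁def
  have hU₁ : U₁ ∈ 𝓤 X := inter_mem hU₀ (tendsto_swap_uniformity hU₀)
  have hU₁c : IsClosed U₁ := hU₀c.inter (hU₀c.preimage continuous_swap)
  have hU₁s : ∀ p : X × X, p ∈ U₁ → (p.2, p.1) ∈ U₁ := by
    rintro ⟨x, y⟩ ⟨h1, h2⟩; exact ⟨h2, h1⟩
  refine ⟨{p | ∀ g : Γ, (g • p.1, g • p.2) ∈ U₁}, ?_, ?_, ?_, ?_, ?_⟩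
  · obtain ⟨V, hV, hVW⟩ := hLyap U₁ hU₁
    exact mem_of_superset hV fun p hp g => hVW g p.1 p.2 hp
  · intro p hp
    have := hp 1
    simp only [one_smul] at this
    exact hU₀U this.1
  · have : {p : X × X | ∀ g : Γ, (g • p.1, g • p.2) ∈ U₁} =
        ⋂ g : Γ, (fun p : X × X => (g • p.1, g • p.2)) ⁻¹' U₁ := by
      ext p; simp [Set.mem_iInter]
    rw [this]
    exact isClosed_iInter fun g => hU₁c.preimage
      (((continuous_const_smul g).comp continuous_fst).prodMk
        ((continuous_const_smul g).comp continuous_snd))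
  · intro x y hxy g
    exact hU₁s _ (hxy g)
  · intro g x y hxy g'
    have := hxy (g' * g)
    simpa [mul_smul] using this

/-- Every element of `P` preserves closed invariant entourages. -/
theorem mem_P_preserves {W : Set (X × X)} (hWc : IsClosed W)
    (hWi : ∀ (g : Γ) (x y : X), (x, y) ∈ W → (g • x, g • y) ∈ W)
    {h : X → X} (hh : h ∈ P Γ X) {x y : X} (hxy : (x, y) ∈ W) :
    (h x, h y) ∈ W := by
  have hsub : P Γ X ⊆ {f : X → X | ∀ x y : X, (x, y) ∈ W → (f x, f y) ∈ W} := by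
    apply closure_minimal
    · rintro f ⟨g, rfl⟩ x y hxy
      exact hWi g x y hxy
    · have : {f : X → X | ∀ x y : X, (x, y) ∈ W → (f x, f y) ∈ W} =
          ⋂ (p : X × X) (_ : p ∈ W), {f : X → X | (f p.1, f p.2) ∈ W} := by
        ext f
        simp only [Set.mem_setOf_eq, Set.mem_iInter]
        exact ⟨fun H p hp => H p.1 p.2 hp, fun H x y hxy => H (x, y) hxy⟩
      rw [this]
      exact isClosed_iInter fun p => isClosed_iInter fun _ =>
        hWc.preimage ((continuous_apply p.1).prodMk (continuous_apply p.2))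
  exact hsub hh x y hxy

/-- Uniform density of the action maps in `P`. -/
theorem unif_dense
    (hLyap : ∀ U ∈ uniformity X, ∃ V ∈ uniformity X,
      ∀ (g : Γ) (x y : X), (x, y) ∈ V → (g • x, g • y) ∈ U)
    {h : X → X} (hh : h ∈ P Γ X) {U : Set (X × X)} (hU : U ∈ 𝓤 X) :
    ∃ g : Γ, ∀ z : X, (g • z, h z) ∈ U := by
  obtain ⟨D₁, hD₁, hD₁U⟩ := comp_mem_uniformity_sets hU
  obtain ⟨D₂, hD₂, hD₂D₁⟩ := comp_mem_uniformity_sets hD₁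
  obtain ⟨W, hW, hWD, hWc, hWs, hWi⟩ := exists_invEnt hLyap hD₂
  have h3 : ∀ a b c d : X, (a, b) ∈ W → (b, c) ∈ W → (c, d) ∈ W → (a, d) ∈ U := by
    intro a b c d h1 h2 h3
    exact hD₁U ⟨c, hD₂D₁ ⟨b, hWD h1, hWD h2⟩, hD₂D₁ ⟨d, hWD h3, refl_mem_uniformity hD₂⟩⟩
  obtain ⟨W₀, ⟨hW₀u, hW₀o⟩, hW₀W⟩ := uniformity_hasBasis_open.mem_iff.1 hW
  obtain ⟨t, -, ht⟩ := isCompact_univ.elim_nhds_subcover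
    (fun x : X => UniformSpace.ball x W₀) (fun x _ => UniformSpace.ball_mem_nhds x hW₀u)
  -- the basic open neighbourhood of `h` given by the finitely many centers
  have hN : IsOpen {f : X → X | ∀ x ∈ t, f x ∈ UniformSpace.ball (h x) W₀} := by
    have : {f : X → X | ∀ x ∈ t, f x ∈ UniformSpace.ball (h x) W₀} =
        ⋂ x ∈ t, (fun f : X → X => f x) ⁻¹' UniformSpace.ball (h x) W₀ := by
      ext f; simp
    rw [this]
    exact isOpen_biInter_finset fun x _ =>
      (UniformSpace.isOpen_ball _ hW₀o).preimage (continuous_apply x)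
  have hhN : h ∈ {f : X → X | ∀ x ∈ t, f x ∈ UniformSpace.ball (h x) W₀} :=
    fun x _ => refl_mem_uniformity hW₀u
  obtain ⟨f, hfN, hfR⟩ := _root_.mem_closure_iff.1 hh _ hN hhN
  obtain ⟨g, rfl⟩ := hfR
  refine ⟨g, fun z => ?_⟩
  obtain ⟨x, hx, hzx⟩ : ∃ x ∈ t, z ∈ UniformSpace.ball x W₀ := by
    have := ht (Set.mem_univ z)
    simpa using this
  -- (x, z) ∈ W₀ ⊆ W
  have h1 : (g • z, g • x) ∈ W := hWs _ _ (hWi g _ _ (hW₀W hzx))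
  have h2 : (g • x, h x) ∈ W := hWs _ _ (hW₀W (hfN x hx))
  have h3' : (h x, h z) ∈ W := mem_P_preserves hWc hWi hh (hW₀W hzx)
  exact h3 _ _ _ _ h1 h2 h3'

/-- Joint continuity of evaluation on `P × X`. -/
theorem continuous_eval
    (hLyap : ∀ U ∈ uniformity X, ∃ V ∈ uniformity X,
      ∀ (g : Γ) (x y : X), (x, y) ∈ V → (g • x, g • y) ∈ U) :
    Continuous fun q : P Γ X × X => (q.1 : X → X) q.2 := by
  rw [continuous_iff_continuousAt]
  rintro ⟨h, x₀⟩ s hs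
  obtain ⟨D, hD, hDs⟩ := UniformSpace.mem_nhds_iff.1 hs
  obtain ⟨D₁, hD₁, hD₁D⟩ := comp_mem_uniformity_sets hD
  obtain ⟨W, hW, hWD, hWc, hWs, hWi⟩ := exists_invEnt hLyap hD₁
  obtain ⟨W₀, ⟨hW₀u, hW₀o⟩, hW₀W⟩ := uniformity_hasBasis_open.mem_iff.1 hW
  have hSh : {k : P Γ X | (k : X → X) x₀ ∈ UniformSpace.ball ((h : X → X) x₀) W₀} ∈ 𝓝 h := by
    refine IsOpen.mem_nhds ?_ (refl_mem_uniformity hW₀u)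
    exact ((UniformSpace.isOpen_ball _ hW₀o).preimage
      ((continuous_apply x₀).comp continuous_subtype_val))
  have hSx : UniformSpace.ball x₀ W₀ ∈ 𝓝 x₀ := UniformSpace.ball_mem_nhds x₀ hW₀u
  rw [Filter.mem_map, nhds_prod_eq]
  refine Filter.mem_of_superset (Filter.prod_mem_prod hSh hSx) ?_
  rintro ⟨k, x⟩ ⟨hk, hx⟩
  apply hDs
  have h1 : ((h : X → X) x₀, (k : X → X) x₀) ∈ D₁ := hWD (hW₀W hk)
  have h2 : ((k : X → X) x₀, (k : X → X) x) ∈ D₁ :=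
    hWD (mem_P_preserves hWc hWi k.2 (hW₀W hx))
  exact hD₁D ⟨_, h1, h2⟩

/-- `P` is closed under composition. -/
theorem comp_mem {h k : X → X} (hh : h ∈ P Γ X) (hk : k ∈ P Γ X) :
    (fun x => h (k x)) ∈ P Γ X := by
  have step1 : ∀ g : Γ, (fun x => g • (k x)) ∈ P Γ X := by
    intro g
    have hT : Continuous fun f : X → X => (fun x => g • (f x)) :=
      continuous_pi fun x => (continuous_const_smul g).comp (continuous_apply x)
    have : (fun x => g • (k x)) ∈ (fun f : X → X => (fun x => g • (f x))) '' P Γ X :=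
      ⟨k, hk, rfl⟩
    have himg : (fun f : X → X => (fun x => g • (f x))) '' P Γ X ⊆ P Γ X := by
      conv_rhs => rw [P, ← closure_closure (s := Set.range (phi Γ (X := X)))]
      refine (image_closure_subset_closure_image hT).trans (closure_mono ?_)
      rintro f ⟨f', ⟨g', rfl⟩, rfl⟩
      exact subset_closure ⟨g * g', funext fun x => by simp [phi, mul_smul]⟩
    exact himg this
  have hS : Continuous fun f : X → X => (fun x => f (k x)) :=
    continuous_pi fun x => continuous_apply (k x)
  have : (fun x => h (k x)) ∈ (fun f : X → X => (fun x => f (k x))) '' P Γ X := ⟨h, hh, rfl⟩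
  have himg : (fun f : X → X => (fun x => f (k x))) '' P Γ X ⊆ P Γ X := by
    conv_rhs => rw [P, ← closure_closure (s := Set.range (phi Γ (X := X)))]
    refine (image_closure_subset_closure_image hS).trans (closure_mono ?_)
    rintro f ⟨f', ⟨g', rfl⟩, rfl⟩
    exact step1 g'
  exact himg this

variable (hLyap : ∀ U ∈ uniformity X, ∃ V ∈ uniformity X,
      ∀ (g : Γ) (x y : X), (x, y) ∈ V → (g • x, g • y) ∈ U)

include hLyap

theorem P_inj {h : X → X} (hh : h ∈ P Γ X) : Function.Injective h := by
  intro x y hxy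
  apply eq_of_uniformity (α := X)
  intro V hV
  obtain ⟨D, hD, hDV⟩ := comp_mem_uniformity_sets hV
  obtain ⟨W, hW, hWD, hWc, hWs, hWi⟩ := exists_invEnt hLyap hD
  obtain ⟨g, hg⟩ := unif_dense hLyap hh hW
  have h1 : (x, g⁻¹ • h x) ∈ W := by
    have := hWi g⁻¹ _ _ (hg x)
    simpa [inv_smul_smul] using this
  have h2 : (y, g⁻¹ • h y) ∈ W := by
    have := hWi g⁻¹ _ _ (hg y)
    simpa [inv_smul_smul] using this
  rw [hxy] at h1
  exact hDV ⟨g⁻¹ • h y, hWD h1, hWD (hWs _ _ h2)⟩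

theorem P_continuous {h : X → X} (hh : h ∈ P Γ X) : Continuous h := by
  have : h = fun x => (fun q : P Γ X × X => (q.1 : X → X) q.2) (⟨h, hh⟩, x) := rfl
  rw [this]
  exact (continuous_eval hLyap).comp (continuous_const.prodMk continuous_id)

theorem P_surj {h : X → X} (hh : h ∈ P Γ X) : Function.Surjective h := by
  intro x
  have hcl : IsClosed (Set.range h) :=
    (isCompact_range (P_continuous hLyap hh)).isClosed
  have : x ∈ closure (Set.range h) := by
    rw [mem_closure_iff_nhds]
    intro s hs
    obtain ⟨V, hV, hVs⟩ := UniformSpace.mem_nhds_iff.1 hs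
    obtain ⟨g, hg⟩ := unif_dense hLyap hh hV
    refine ⟨h (g⁻¹ • x), hVs ?_, Set.mem_range_self _⟩
    have := hg (g⁻¹ • x)
    exact (by simpa [smul_inv_smul] using this : (x, h (g⁻¹ • x)) ∈ V)
  rw [hcl.closure_eq] at this
  exact this

theorem P_inv_mem {h : X → X} (hh : h ∈ P Γ X) :
    ∃ k ∈ P Γ X, (∀ x, h (k x) = x) ∧ ∀ x, k (h x) = x := by
  have hbij : Function.Bijective h := ⟨P_inj hLyap hh, P_surj hLyap hh⟩
  let e := Equiv.ofBijective h hbij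
  refine ⟨e.symm, ?_, fun x => e.apply_symm_apply x, fun x => e.symm_apply_apply x⟩
  rw [P, mem_closure_iff]
  intro o ho hko
  obtain ⟨I, u, hIu, hIo⟩ := isOpen_pi_iff.1 ho _ hko
  have hball : ∀ i : X, ∃ V, V ∈ 𝓤 X ∧ (i ∈ I → UniformSpace.ball (e.symm i) V ⊆ u i) := by
    intro i
    by_cases hi : i ∈ I
    · obtain ⟨V, hV, hVb⟩ := UniformSpace.mem_nhds_iff.1 ((hIu i hi).1.mem_nhds (hIu i hi).2)
      exact ⟨V, hV, fun _ => hVb⟩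
    · exact ⟨Set.univ, Filter.univ_mem, fun h => absurd h hi⟩
  choose V hVu hVb using hball
  have hVm : (⋂ i ∈ I, V i) ∈ 𝓤 X := (Filter.biInter_finset_mem I).2 fun i _ => hVu i
  obtain ⟨W, hW, hWV, hWc, hWs, hWi⟩ := exists_invEnt hLyap hVm
  obtain ⟨g, hg⟩ := unif_dense hLyap hh hW
  refine ⟨phi Γ g⁻¹, hIo ?_, Set.mem_range_self _⟩
  intro i hi
  rw [Finset.mem_coe] at hi
  have h1 : (g • (e.symm i), h (e.symm i)) ∈ W := hg _
  rw [show h (e.symm i) = i from e.apply_symm_apply i] at h1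
  have h2 : (e.symm i, g⁻¹ • i) ∈ W := by
    have := hWi g⁻¹ _ _ h1
    simpa [inv_smul_smul] using this
  exact hVb i hi (Set.mem_iInter₂.1 (hWV h2) i hi)

theorem isClosed_P : IsClosed (P Γ X) := isClosed_closure

/-- The group structure on `↥(P Γ X)` : composition, with inverses coming from `P_inv_mem`. -/
noncomputable def pGroup : Group ↥(P Γ X) where
  mul h k := ⟨fun x => (h : X → X) ((k : X → X) x), comp_mem h.2 k.2⟩
  mul_assoc _ _ _ := Subtype.ext rfl
  one := ⟨id, id_mem⟩
  one_mul _ := Subtype.ext rfl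
  mul_one _ := Subtype.ext rfl
  inv h := ⟨(P_inv_mem hLyap h.2).choose, (P_inv_mem hLyap h.2).choose_spec.1⟩
  inv_mul_cancel h := Subtype.ext (funext fun x => (P_inv_mem hLyap h.2).choose_spec.2.2 x)

end Stmt8Aux

open Stmt8Aux in
/-- Unique ergodicity: a Lyapunov stable action on a compact Hausdorff space with a dense orbit
admits at most one invariant regular Borel probability measure. -/
theorem stmt8 {Γ X : Type*} [Group Γ] [UniformSpace X] [CompactSpace X] [T2Space X]
    [MulAction Γ X] [ContinuousConstSMul Γ X] [MeasurableSpace X] [BorelSpace X]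
    (hLyap : ∀ U ∈ uniformity X, ∃ V ∈ uniformity X,
      ∀ (g : Γ) (x y : X), (x, y) ∈ V → (g • x, g • y) ∈ U)
    (a : X) (ha : Dense (MulAction.orbit Γ a))
    (μ ν : Measure X) [IsProbabilityMeasure μ] [IsProbabilityMeasure ν]
    [μ.Regular] [ν.Regular]
    (hμ : ∀ (g : Γ) (A : Set X), MeasurableSet A → μ ((g • ·) '' A) = μ A)
    (hν : ∀ (g : Γ) (A : Set X), MeasurableSet A → ν ((g • ·) '' A) = ν A) :
    μ = ν := by
  classical
  letI : Group ↥(P Γ X) := pGroup hLyap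
  haveI : CompactSpace ↥(P Γ X) :=
    isCompact_iff_compactSpace.1 ((isClosed_P (Γ := Γ) (X := X) hLyap).isCompact)
  have hmul : Continuous fun p : ↥(P Γ X) × ↥(P Γ X) => p.1 * p.2 := by
    show Continuous fun p : ↥(P Γ X) × ↥(P Γ X) =>
      (⟨fun x => (p.1 : X → X) ((p.2 : X → X) x), comp_mem p.1.2 p.2.2⟩ : ↥(P Γ X))
    apply Continuous.subtype_mk
    refine continuous_pi fun x => ?_
    exact (continuous_eval hLyap).comp
      (continuous_fst.prodMk ((continuous_apply x).comp
        (continuous_subtype_val.comp continuous_snd)))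
  have hinv : Continuous fun h : ↥(P Γ X) => h⁻¹ := by
    have hgr : IsClosed {p : ↥(P Γ X) × ↥(P Γ X) | p.1 * p.2 = 1} :=
      isClosed_eq hmul continuous_const
    rw [continuous_iff_isClosed]
    intro C hC
    have himg : (fun h : ↥(P Γ X) => h⁻¹) ⁻¹' C =
        Prod.fst '' ({p : ↥(P Γ X) × ↥(P Γ X) | p.1 * p.2 = 1} ∩ Set.univ ×ˢ C) := by
      ext h
      constructor
      · intro hh
        exact ⟨(h, h⁻¹), ⟨mul_inv_cancel h, Set.mem_univ _, hh⟩, rfl⟩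
      · rintro ⟨⟨h', k⟩, ⟨hk1, -, hkC⟩, rfl⟩
        have hk : h'⁻¹ = k := inv_eq_of_mul_eq_one_right hk1
        simpa [Set.mem_preimage, hk] using hkC
    rw [himg]
    exact ((hgr.inter (isClosed_univ.prod hC)).isCompact.image continuous_fst).isClosed
  haveI : IsTopologicalGroup ↥(P Γ X) := { continuous_mul := hmul, continuous_inv := hinv }
  letI : MeasurableSpace ↥(P Γ X) := borel _
  haveI : BorelSpace ↥(P Γ X) := ⟨rfl⟩
  haveI : Nonempty ↥(P Γ X) := ⟨1⟩
  -- the (inverted) Haar measure on the compact group `↥(P Γ X)`; it is right invariant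
  have key : ∀ (ρ : Measure X), IsProbabilityMeasure ρ →
      (∀ (g : Γ) (A : Set X), MeasurableSet A → ρ ((g • ·) '' A) = ρ A) →
      ∀ f : X → ℝ, Continuous f →
        (((Measure.haar : Measure ↥(P Γ X)).inv Set.univ).toReal) * ∫ x, f x ∂ρ
          = ∫ h : ↥(P Γ X), f ((h : X → X) a) ∂(Measure.haar : Measure ↥(P Γ X)).inv := by
    intro ρ hρP ρinv f hf
    have hmap : ∀ g : Γ, Measure.map (fun x => g • x) ρ = ρ := by
      intro g
      ext A hA
      rw [Measure.map_apply (continuous_const_smul g).measurable hA]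
      have hpre : (fun x : X => g • x) ⁻¹' A = (fun x => g⁻¹ • x) '' A := by
        ext x
        constructor
        · intro hx; exact ⟨g • x, hx, by simp⟩
        · rintro ⟨y, hy, rfl⟩; simpa using hy
      rw [hpre, ρinv g⁻¹ A hA]
    have hint : ∀ φf : X → ℝ, Continuous φf → Integrable φf ρ := fun φf hφ =>
      hφ.integrable_of_hasCompactSupport (HasCompactSupport.of_compactSpace _)
    -- invariance of the integral under every element of the compact group
    have hGinv : ∀ h : ↥(P Γ X), ∫ x, f ((h : X → X) x) ∂ρ = ∫ x, f x ∂ρ := by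
      intro h
      apply eq_of_forall_dist_le
      intro ε hε
      have hUC := CompactSpace.uniformContinuous_of_continuous hf
      have hU : (fun p : X × X => (f p.1, f p.2)) ⁻¹'
          {q : ℝ × ℝ | dist q.1 q.2 < ε/2} ∈ 𝓤 X :=
        hUC (Metric.dist_mem_uniformity (by positivity))
      obtain ⟨g, hg⟩ := unif_dense hLyap h.2 hU
      have hgint : ∫ x, f (g • x) ∂ρ = ∫ x, f x ∂ρ := by
        conv_rhs => rw [← hmap g]
        rw [integral_map (continuous_const_smul g).aemeasurable hf.aestronglyMeasurable]
      have h1 : Continuous fun x => f ((h : X → X) x) := hf.comp (P_continuous hLyap h.2)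
      have h2 : Continuous fun x => f (g • x) := hf.comp (continuous_const_smul g)
      have hdist : dist (∫ x, f ((h : X → X) x) ∂ρ) (∫ x, f (g • x) ∂ρ) ≤ ε/2 := by
        rw [dist_eq_norm, ← integral_sub (hint _ h1) (hint _ h2)]
        have hb := norm_integral_le_of_norm_le_const (μ := ρ)
          (f := fun x => f ((h : X → X) x) - f (g • x)) (C := ε/2)
          (Filter.Eventually.of_forall fun x => by
            have := hg x
            simp only [Set.mem_preimage, Set.mem_setOf_eq] at this
            rw [Real.norm_eq_abs, ← Real.dist_eq]
            exact le_of_lt (dist_comm (f (g • x)) (f ((h : X → X) x)) ▸ this))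
        simpa [measure_univ] using hb
      calc dist (∫ x, f ((h : X → X) x) ∂ρ) (∫ x, f x ∂ρ)
          = dist (∫ x, f ((h : X → X) x) ∂ρ) (∫ x, f (g • x) ∂ρ) := by rw [hgint]
        _ ≤ ε/2 := hdist
        _ ≤ ε := by linarith
    -- transitivity of the compact group action
    have htrans : ∀ x : X, ∃ h : ↥(P Γ X), (h : X → X) a = x := by
      intro x
      have hc : IsCompact ((fun h : ↥(P Γ X) => (h : X → X) a) '' Set.univ) :=
        isCompact_univ.image
          ((continuous_eval hLyap).comp (continuous_id.prodMk continuous_const))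
      have horb : MulAction.orbit Γ a ⊆ (fun h : ↥(P Γ X) => (h : X → X) a) '' Set.univ := by
        rintro _ ⟨g, rfl⟩
        exact ⟨⟨phi Γ g, phi_mem g⟩, Set.mem_univ _, rfl⟩
      have hx : x ∈ closure ((fun h : ↥(P Γ X) => (h : X → X) a) '' Set.univ) :=
        closure_mono horb (ha x)
      rw [hc.isClosed.closure_eq] at hx
      obtain ⟨h, -, hh⟩ := hx
      exact ⟨h, hh⟩
    -- the averaged function is constant
    have hconst : ∀ x : X,
        ∫ h : ↥(P Γ X), f ((h : X → X) x) ∂(Measure.haar : Measure ↥(P Γ X)).inv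
          = ∫ h : ↥(P Γ X), f ((h : X → X) a) ∂(Measure.haar : Measure ↥(P Γ X)).inv := by
      intro x
      obtain ⟨h₁, rfl⟩ := htrans x
      have hrw : ∀ h : ↥(P Γ X), f ((h : X → X) ((h₁ : X → X) a))
          = (fun k : ↥(P Γ X) => f ((k : X → X) a)) (h * h₁) := fun h => rfl
      simp_rw [hrw]
      exact integral_mul_right_eq_self (μ := (Measure.haar : Measure ↥(P Γ X)).inv)
        (fun k : ↥(P Γ X) => f ((k : X → X) a)) h₁
    -- Fubini
    have hFub : ∫ h : ↥(P Γ X), (∫ x, f ((h : X → X) x) ∂ρ) ∂(Measure.haar : Measure ↥(P Γ X)).inv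
        = ∫ x, (∫ h : ↥(P Γ X), f ((h : X → X) x) ∂(Measure.haar : Measure ↥(P Γ X)).inv) ∂ρ := by
      apply integral_integral_swap_of_hasCompactSupport
      · exact hf.comp (continuous_eval hLyap)
      · exact HasCompactSupport.of_compactSpace _
    calc (((Measure.haar : Measure ↥(P Γ X)).inv Set.univ).toReal) * ∫ x, f x ∂ρ
        = ∫ h : ↥(P Γ X), (∫ x, f ((h : X → X) x) ∂ρ)
            ∂(Measure.haar : Measure ↥(P Γ X)).inv := by
          simp_rw [hGinv]
          rw [integral_const, smul_eq_mul, measureReal_def]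
      _ = ∫ x, (∫ h : ↥(P Γ X), f ((h : X → X) x)
            ∂(Measure.haar : Measure ↥(P Γ X)).inv) ∂ρ := hFub
      _ = ∫ x, (∫ h : ↥(P Γ X), f ((h : X → X) a)
            ∂(Measure.haar : Measure ↥(P Γ X)).inv) ∂ρ := by simp_rw [hconst]
      _ = ∫ h : ↥(P Γ X), f ((h : X → X) a) ∂(Measure.haar : Measure ↥(P Γ X)).inv := by
          rw [integral_const, probReal_univ, one_smul]
  -- equality of integrals of continuous functions
  have hIeq : ∀ f : X → ℝ, Continuous f → ∫ x, f x ∂μ = ∫ x, f x ∂ν := by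
    intro f hf
    have h1 := key μ ‹_› hμ f hf
    have h2 := key ν ‹_› hν f hf
    have hpos : (((Measure.haar : Measure ↥(P Γ X)).inv Set.univ).toReal) ≠ 0 := by
      rw [Measure.inv_apply, Set.inv_univ]
      refine ENNReal.toReal_ne_zero.2 ⟨?_, ?_⟩
      · exact (isOpen_univ.measure_pos (Measure.haar : Measure ↥(P Γ X))
          Set.univ_nonempty).ne'
      · exact isCompact_univ.measure_lt_top.ne
    exact mul_left_cancel₀ hpos (h1.trans h2.symm)
  -- equality on compact sets
  have hKeq : ∀ K : Set X, IsCompact K → μ K = ν K := by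
    intro K hK
    rw [hK.measure_eq_biInf_integral_hasCompactSupport μ,
      hK.measure_eq_biInf_integral_hasCompactSupport ν]
    exact iInf_congr fun f => iInf_congr fun hc => iInf_congr fun _ =>
      iInf_congr fun _ => iInf_congr fun _ => by rw [hIeq f hc]
  -- equality on open sets
  have hOpen : ∀ U : Set X, IsOpen U → μ U = ν U := by
    intro U hU
    rw [hU.measure_eq_iSup_isCompact μ, hU.measure_eq_iSup_isCompact ν]
    exact iSup_congr fun K => iSup_congr fun _ => iSup_congr fun hKc => hKeq K hKc
  ext A hA
  rw [Set.measure_eq_iInf_isOpen A μ, Set.measure_eq_iInf_isOpen A ν]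
  exact iInf_congr fun U => iInf_congr fun _ => iInf_congr fun hU => hOpen U hU
end

section
/- Let Γ act on a compact Hausdorff space X by an action such that each orbit is finite with cardinality bounded by N, and the action is uniformly continuous. Then for any continuous φ : X → ℂ, each function φ_x : Γ → ℂ, φ_x(g) = φ(g•x), is periodic in the sense that it factors through the finite orbit, its unique invariant mean equals the orbit average M(φ_x) = (1/|Γ•x|) · Σ_{y ∈ Γ•x} φ(y), and the function x ↦ (1/|Γ•x|) Σ_{y ∈ Γ•x} φ(y) is continuous on X. -/
open Finset MulAction

lemma aux_bdd_sum {Γ ι : Type*} (s : Finset ι) (F : ι → Γ → ℂ)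
    (hF : ∀ i, ∃ C, ∀ g, ‖F i g‖ ≤ C) : ∃ C, ∀ g, ‖∑ i ∈ s, F i g‖ ≤ C := by
  choose C hC using hF
  exact ⟨∑ i ∈ s, C i, fun g => (norm_sum_le _ _).trans (Finset.sum_le_sum fun i _ => hC i g)⟩

lemma aux_Msum {Γ ι : Type*} (M : (Γ → ℂ) → ℂ)
    (hadd : ∀ f₁ f₂ : Γ → ℂ, (∃ C, ∀ g, ‖f₁ g‖ ≤ C) → (∃ C, ∀ g, ‖f₂ g‖ ≤ C) →
        M (f₁ + f₂) = M f₁ + M f₂)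
    (hsmul : ∀ (c : ℂ) (f : Γ → ℂ), (∃ C, ∀ g, ‖f g‖ ≤ C) → M (c • f) = c * M f)
    (s : Finset ι) (F : ι → Γ → ℂ) (hF : ∀ i, ∃ C, ∀ g, ‖F i g‖ ≤ C) :
    M (fun g => ∑ i ∈ s, F i g) = ∑ i ∈ s, M (F i) := by
  have hzero : M 0 = 0 := by
    have := hsmul 0 (fun _ => 1) ⟨1, fun g => by simp⟩
    simpa using this
  induction s using Finset.cons_induction with
  | empty => simpa using (show M (fun _ => 0) = 0 from hzero)
  | cons a s ha ih =>
    have : (fun g => ∑ i ∈ Finset.cons a s ha, F i g)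
        = F a + fun g => ∑ i ∈ s, F i g := by
      funext g; simp [Finset.sum_cons]
    rw [this, hadd _ _ (hF a) (aux_bdd_sum s F hF), ih, Finset.sum_cons]


lemma aux_coset_smul {Γ X : Type*} [Group Γ] [MulAction Γ X] {x : X} {g g' : Γ}
    (h : (QuotientGroup.mk g : Γ ⧸ stabilizer Γ x) = QuotientGroup.mk g') :
    g • x = g' • x := by
  rw [QuotientGroup.eq] at h
  have h2 : (g⁻¹ * g') • x = x := h
  calc g • x = g • ((g⁻¹ * g') • x) := by rw [h2]
    _ = g' • x := by rw [smul_smul, mul_inv_cancel_left]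

lemma aux_out_smul {Γ X : Type*} [Group Γ] [MulAction Γ X] {x : X} (g : Γ) :
    (QuotientGroup.mk g : Γ ⧸ stabilizer Γ x).out • x = g • x :=
  aux_coset_smul (QuotientGroup.out_eq' _)

lemma aux_out_inj {Γ X : Type*} [Group Γ] [MulAction Γ X] (x : X) :
    Function.Injective (fun q : Γ ⧸ stabilizer Γ x => q.out • x) := by
  intro q r h
  have h' : q.out • x = r.out • x := h
  have : (QuotientGroup.mk q.out : Γ ⧸ stabilizer Γ x) = QuotientGroup.mk r.out := by
    rw [QuotientGroup.eq]
    show (q.out⁻¹ * r.out) • x = x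
    rw [mul_smul, ← h', inv_smul_smul]
  rwa [QuotientGroup.out_eq', QuotientGroup.out_eq'] at this

lemma aux_orbit_image {Γ X : Type*} [Group Γ] [MulAction Γ X] [DecidableEq X] (x : X)
    [Fintype (Γ ⧸ stabilizer Γ x)] (hfx : (orbit Γ x).Finite) :
    hfx.toFinset = Finset.image (fun q : Γ ⧸ stabilizer Γ x => q.out • x) Finset.univ := by
  ext y
  simp only [Set.Finite.mem_toFinset, Finset.mem_image, Finset.mem_univ, true_and]
  constructor
  · rintro ⟨g, rfl⟩
    exact ⟨QuotientGroup.mk g, aux_out_smul g⟩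
  · rintro ⟨q, rfl⟩
    exact ⟨q.out, rfl⟩

lemma aux_card {Γ X : Type*} [Group Γ] [MulAction Γ X] (x : X)
    [Fintype (Γ ⧸ stabilizer Γ x)] (hfx : (orbit Γ x).Finite) :
    hfx.toFinset.card = Fintype.card (Γ ⧸ stabilizer Γ x) := by
  classical
  rw [aux_orbit_image x hfx, Finset.card_image_of_injective _ (aux_out_inj x), Finset.card_univ]

lemma aux_sum_orbit {Γ X : Type*} [Group Γ] [MulAction Γ X] (x : X)
    [Fintype (Γ ⧸ stabilizer Γ x)] (hfx : (orbit Γ x).Finite) (φ : X → ℂ) :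
    ∑ y ∈ hfx.toFinset, φ y = ∑ q : Γ ⧸ stabilizer Γ x, φ (q.out • x) := by
  classical
  rw [aux_orbit_image x hfx, Finset.sum_image]
  intro a _ b _ h
  exact aux_out_inj x h

noncomputable def aux_fintypeQ {Γ X : Type*} [Group Γ] [MulAction Γ X] (x : X)
    (hfx : (orbit Γ x).Finite) : Fintype (Γ ⧸ stabilizer Γ x) := by
  have : Finite (orbit Γ x) := hfx
  have : Finite (Γ ⧸ stabilizer Γ x) := Finite.of_equiv _ (orbitEquivQuotientStabilizer Γ x)
  exact Fintype.ofFinite _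

lemma aux_cont {Γ X : Type*} [Group Γ] [TopologicalSpace X] [T2Space X] [MulAction Γ X]
    [ContinuousConstSMul Γ X]
    (hfin : ∀ x : X, (orbit Γ x).Finite)
    (hUC : ∀ x : X, ∀ W ∈ nhds x, ∃ V ∈ nhds x, ∀ g : Γ, g • x = x → ∀ y ∈ V, g • y ∈ W)
    (φ : C(X, ℂ)) :
    Continuous fun x : X =>
      (((hfin x).toFinset.card : ℂ))⁻¹ * ∑ y ∈ (hfin x).toFinset, φ y := by
  classical
  rw [continuous_iff_continuousAt]
  intro x
  unfold ContinuousAt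
  rw [Metric.tendsto_nhds]
  intro ε hε
  have : Fintype (Γ ⧸ stabilizer Γ x) := aux_fintypeQ x (hfin x)
  set n := Fintype.card (Γ ⧸ stabilizer Γ x) with hn
  have hnpos : 0 < n := Fintype.card_pos
  -- disjoint neighborhoods of the orbit points
  obtain ⟨U, hU, hUdisj⟩ := Set.Finite.t2_separation (hfin x)
  -- refined neighborhoods
  set U' : (Γ ⧸ stabilizer Γ x) → Set X :=
    fun q => U (q.out • x) ∩ φ ⁻¹' Metric.ball (φ (q.out • x)) (ε / 2) with hU'
  have hU'open : ∀ q, IsOpen (U' q) :=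
    fun q => ((hU _).2.inter (Metric.isOpen_ball.preimage φ.continuous))
  have hU'mem : ∀ q, q.out • x ∈ U' q := by
    intro q
    exact ⟨(hU _).1, by simp [Metric.mem_ball, hε]⟩
  have hU'disj : ∀ q r : Γ ⧸ stabilizer Γ x, q ≠ r → ∀ y, y ∈ U' q → y ∈ U' r → False := by
    intro q r hqr y hyq hyr
    have hmemq : q.out • x ∈ orbit Γ x := ⟨q.out, rfl⟩
    have hmemr : r.out • x ∈ orbit Γ x := ⟨r.out, rfl⟩
    have hne : q.out • x ≠ r.out • x := fun h => hqr (aux_out_inj x h)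
    have := hUdisj hmemq hmemr hne
    exact Set.disjoint_left.mp this hyq.1 hyr.1
  -- W₀
  set W₀ : Set X := ⋂ q : Γ ⧸ stabilizer Γ x, (fun z => q.out • z) ⁻¹' U' q with hW₀
  have hW₀open : IsOpen W₀ :=
    isOpen_iInter_of_finite fun q => (hU'open q).preimage (continuous_const_smul _)
  have hxW₀ : x ∈ W₀ := Set.mem_iInter.mpr fun q => hU'mem q
  obtain ⟨V, hVmem, hVprop⟩ := hUC x W₀ (hW₀open.mem_nhds hxW₀)
  filter_upwards [hVmem] with z hz
  -- the stabilizer-suborbit of z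
  set Hz : Set X := {w : X | ∃ h : Γ, h • x = x ∧ h • z = w} with hHz
  have hHzfin : Hz.Finite := (hfin z).subset (by rintro w ⟨h, _, rfl⟩; exact ⟨h, rfl⟩)
  have hHzW₀ : ∀ w ∈ Hz, w ∈ W₀ := by
    rintro w ⟨h, hhx, rfl⟩
    exact hVprop h hhx z hz
  have hzHz : z ∈ Hz := ⟨1, by simp, by simp⟩
  set m := hHzfin.toFinset.card with hm
  have hmpos : 0 < m := Finset.card_pos.mpr ⟨z, hHzfin.mem_toFinset.mpr hzHz⟩
  -- the key point: each q.out • w lands in U' q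
  have hkey : ∀ (q : Γ ⧸ stabilizer Γ x), ∀ w ∈ Hz, q.out • w ∈ U' q := by
    intro q w hw
    exact Set.mem_iInter.mp (hHzW₀ w hw) q
  -- the orbit of z decomposes
  have himage : (hfin z).toFinset =
      Finset.image (fun p : (Γ ⧸ stabilizer Γ x) × X => p.1.out • p.2)
        (Finset.univ ×ˢ hHzfin.toFinset) := by
    ext y
    simp only [Set.Finite.mem_toFinset, Finset.mem_image, Finset.mem_product, Finset.mem_univ,
      true_and]
    constructor
    · rintro ⟨g, rfl⟩
      refine ⟨⟨QuotientGroup.mk g, ((QuotientGroup.mk g : Γ ⧸ stabilizer Γ x).out⁻¹ * g) • z⟩,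
        ⟨(QuotientGroup.mk g : Γ ⧸ stabilizer Γ x).out⁻¹ * g, ?_, rfl⟩, ?_⟩
      · have : ((QuotientGroup.mk g : Γ ⧸ stabilizer Γ x).out⁻¹ * g) ∈ stabilizer Γ x := by
          rw [← QuotientGroup.eq, QuotientGroup.out_eq']
        exact this
      · show (QuotientGroup.mk g : Γ ⧸ stabilizer Γ x).out •
          (((QuotientGroup.mk g : Γ ⧸ stabilizer Γ x).out⁻¹ * g) • z) = g • z
        rw [smul_smul, mul_inv_cancel_left]
    · rintro ⟨⟨q, w⟩, ⟨h, hhx, rfl⟩, rfl⟩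
      exact ⟨q.out * h, (mul_smul _ _ _)⟩
  have hinj : Set.InjOn (fun p : (Γ ⧸ stabilizer Γ x) × X => p.1.out • p.2)
      ↑((Finset.univ : Finset (Γ ⧸ stabilizer Γ x)) ×ˢ hHzfin.toFinset) := by
    rintro ⟨q, w⟩ hqw ⟨r, w'⟩ hrw' heq
    have heq' : q.out • w = r.out • w' := heq
    simp only [Finset.coe_product, Finset.coe_univ, Set.mem_prod, Set.mem_univ, true_and,
      Set.Finite.coe_toFinset, Finset.mem_coe] at hqw hrw'
    have h1 : q.out • w ∈ U' q := hkey q w hqw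
    have h2 : r.out • w' ∈ U' r := hkey r w' hrw'
    have hqr : q = r := by
      by_contra hne
      rw [← heq'] at h2
      exact hU'disj q r hne (q.out • w) h1 h2
    subst hqr
    have hww : w = w' := smul_left_cancel _ heq'
    rw [hww]
  -- cardinality
  have hcardz : (hfin z).toFinset.card = n * m := by
    rw [himage, Finset.card_image_of_injOn hinj, Finset.card_product, Finset.card_univ, hn, hm]
  -- sum decomposition
  have hsumz : ∑ y ∈ (hfin z).toFinset, φ y =
      ∑ q : Γ ⧸ stabilizer Γ x, ∑ w ∈ hHzfin.toFinset, φ (q.out • w) := by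
    rw [himage, Finset.sum_image hinj, Finset.sum_product]
  -- A x
  have hAx : (((hfin x).toFinset.card : ℂ))⁻¹ * ∑ y ∈ (hfin x).toFinset, φ y
      = ((n : ℂ))⁻¹ * ∑ q : Γ ⧸ stabilizer Γ x, φ (q.out • x) := by
    rw [aux_card x (hfin x), aux_sum_orbit x (hfin x)]
  -- the estimate
  have hterm : ∀ (q : Γ ⧸ stabilizer Γ x), ∀ w ∈ hHzfin.toFinset,
      ‖φ (q.out • w) - φ (q.out • x)‖ ≤ ε / 2 := by
    intro q w hw
    have := (hkey q w (hHzfin.mem_toFinset.mp hw)).2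
    rw [Set.mem_preimage, Metric.mem_ball, dist_eq_norm] at this
    exact le_of_lt this
  have hdiff : (((hfin z).toFinset.card : ℂ))⁻¹ * ∑ y ∈ (hfin z).toFinset, φ y
      - (((hfin x).toFinset.card : ℂ))⁻¹ * ∑ y ∈ (hfin x).toFinset, φ y
      = ((n * m : ℕ) : ℂ)⁻¹ *
        ∑ q : Γ ⧸ stabilizer Γ x, ∑ w ∈ hHzfin.toFinset, (φ (q.out • w) - φ (q.out • x)) := by
    rw [hcardz, hsumz, hAx]
    have hAx2 : ((n : ℂ))⁻¹ * ∑ q : Γ ⧸ stabilizer Γ x, φ (q.out • x)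
        = ((n * m : ℕ) : ℂ)⁻¹ *
          ∑ q : Γ ⧸ stabilizer Γ x, ∑ _w ∈ hHzfin.toFinset, φ (q.out • x) := by
      have hmne : (m : ℂ) ≠ 0 := Nat.cast_ne_zero.mpr hmpos.ne'
      have e1 : ∑ q : Γ ⧸ stabilizer Γ x, ∑ _w ∈ hHzfin.toFinset, φ (q.out • x)
          = (m : ℂ) * ∑ q : Γ ⧸ stabilizer Γ x, φ (q.out • x) := by
        calc ∑ q : Γ ⧸ stabilizer Γ x, ∑ _w ∈ hHzfin.toFinset, φ (q.out • x)
            = ∑ q : Γ ⧸ stabilizer Γ x, (m : ℂ) * φ (q.out • x) :=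
              Finset.sum_congr rfl fun q _ => by rw [Finset.sum_const, nsmul_eq_mul]
          _ = (m : ℂ) * ∑ q : Γ ⧸ stabilizer Γ x, φ (q.out • x) := (Finset.mul_sum _ _ _).symm
      rw [e1]
      push_cast
      rw [mul_inv, mul_assoc, inv_mul_cancel_left₀ hmne]
    rw [hAx2, ← mul_sub, ← Finset.sum_sub_distrib]
    congr 1
    exact Finset.sum_congr rfl fun q _ => (Finset.sum_sub_distrib _ _).symm
  rw [dist_eq_norm, hdiff]
  have hbound : ‖((n * m : ℕ) : ℂ)⁻¹ *
      ∑ q : Γ ⧸ stabilizer Γ x, ∑ w ∈ hHzfin.toFinset, (φ (q.out • w) - φ (q.out • x))‖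
      ≤ ε / 2 := by
    rw [norm_mul, norm_inv]
    have h1 : ‖((n * m : ℕ) : ℂ)‖ = ((n * m : ℕ) : ℝ) := by
      simp
    rw [h1]
    have h2 : ‖∑ q : Γ ⧸ stabilizer Γ x, ∑ w ∈ hHzfin.toFinset,
        (φ (q.out • w) - φ (q.out • x))‖ ≤ ((n * m : ℕ) : ℝ) * (ε / 2) := by
      calc ‖∑ q : Γ ⧸ stabilizer Γ x, ∑ w ∈ hHzfin.toFinset,
          (φ (q.out • w) - φ (q.out • x))‖
          ≤ ∑ q : Γ ⧸ stabilizer Γ x, ∑ w ∈ hHzfin.toFinset,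
            ‖φ (q.out • w) - φ (q.out • x)‖ := by
            refine (norm_sum_le _ _).trans (Finset.sum_le_sum fun q _ => norm_sum_le _ _)
        _ ≤ ∑ _q : Γ ⧸ stabilizer Γ x, ∑ _w ∈ hHzfin.toFinset, (ε / 2) := by
            exact Finset.sum_le_sum fun q _ => Finset.sum_le_sum fun w hw => hterm q w hw
        _ = ((n * m : ℕ) : ℝ) * (ε / 2) := by
            simp [Finset.sum_const, hn, hm]
            push_cast
            ring
    have hpos : (0 : ℝ) < ((n * m : ℕ) : ℝ) := by
      exact_mod_cast Nat.pos_of_ne_zero (Nat.mul_ne_zero hnpos.ne' hmpos.ne')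
    calc (((n * m : ℕ) : ℝ))⁻¹ * ‖∑ q : Γ ⧸ stabilizer Γ x, ∑ w ∈ hHzfin.toFinset,
        (φ (q.out • w) - φ (q.out • x))‖
        ≤ (((n * m : ℕ) : ℝ))⁻¹ * (((n * m : ℕ) : ℝ) * (ε / 2)) := by
          exact mul_le_mul_of_nonneg_left h2 (by positivity)
      _ = ε / 2 := by
          rw [inv_mul_cancel_left₀ hpos.ne']
  exact lt_of_le_of_lt hbound (by linarith)

section
variable {Γ X : Type*} [Group Γ] [MulAction Γ X]

lemma aux_mean (x : X) (hfx : (orbit Γ x).Finite) [Fintype (Γ ⧸ stabilizer Γ x)] (φ : X → ℂ)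
    (M : (Γ → ℂ) → ℂ)
    (hadd : ∀ f₁ f₂ : Γ → ℂ, (∃ C, ∀ g, ‖f₁ g‖ ≤ C) → (∃ C, ∀ g, ‖f₂ g‖ ≤ C) →
        M (f₁ + f₂) = M f₁ + M f₂)
    (hsmul : ∀ (c : ℂ) (f : Γ → ℂ), (∃ C, ∀ g, ‖f g‖ ≤ C) → M (c • f) = c * M f)
    (hone : M (fun _ => 1) = 1)
    (hinv : ∀ (f : Γ → ℂ) (h : Γ), (∃ C, ∀ g, ‖f g‖ ≤ C) → M (fun g => f (h * g)) = M f) :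
    M (fun g => φ (g • x)) = ((Fintype.card (Γ ⧸ stabilizer Γ x) : ℂ))⁻¹
      * ∑ q : Γ ⧸ stabilizer Γ x, φ (q.out • x) := by
  classical
  let χ : (Γ ⧸ stabilizer Γ x) → Γ → ℂ := fun q g => if QuotientGroup.mk g = q then 1 else 0
  have χbd : ∀ q, ∃ C, ∀ g, ‖χ q g‖ ≤ C := fun q =>
    ⟨1, fun g => by by_cases h : (QuotientGroup.mk g : (Γ ⧸ stabilizer Γ x)) = q <;> simp [χ, h]⟩
  have cχbd : ∀ (c : ℂ) (q : (Γ ⧸ stabilizer Γ x)), ∃ C, ∀ g, ‖c * χ q g‖ ≤ C := fun c q =>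
    ⟨‖c‖, fun g => by by_cases h : (QuotientGroup.mk g : (Γ ⧸ stabilizer Γ x)) = q <;> simp [χ, h]⟩
  -- decompose f
  have hdecomp : (fun g => φ (g • x)) = fun g => ∑ q : (Γ ⧸ stabilizer Γ x), φ (q.out • x) * χ q g := by
    funext g
    have : ∑ q : (Γ ⧸ stabilizer Γ x), φ (q.out • x) * χ q g
        = ∑ q : (Γ ⧸ stabilizer Γ x), if (QuotientGroup.mk g : (Γ ⧸ stabilizer Γ x)) = q then φ (q.out • x) else 0 := by
      refine Finset.sum_congr rfl fun q _ => ?_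
      by_cases h : (QuotientGroup.mk g : (Γ ⧸ stabilizer Γ x)) = q <;> simp [χ, h]
    rw [this, Finset.sum_ite_eq]
    simp [aux_out_smul g]
  -- value of M on indicators
  have hχinv : ∀ q : (Γ ⧸ stabilizer Γ x), M (χ q) = M (χ (QuotientGroup.mk 1)) := by
    intro q
    have hfun : χ q = fun g => χ (QuotientGroup.mk 1) (q.out⁻¹ * g) := by
      funext g
      have hiff : ((QuotientGroup.mk (q.out⁻¹ * g) : (Γ ⧸ stabilizer Γ x)) = QuotientGroup.mk 1)
          ↔ (QuotientGroup.mk g : (Γ ⧸ stabilizer Γ x)) = q := by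
        conv_rhs => rw [← QuotientGroup.out_eq' q]
        rw [QuotientGroup.eq, QuotientGroup.eq]
        simp [mul_inv_rev]
      simp only [χ]
      rw [if_congr hiff rfl rfl]
    rw [hfun]
    exact hinv _ _ (χbd _)
  -- sum of indicators is 1
  have hsum1 : (fun g => ∑ q : (Γ ⧸ stabilizer Γ x), χ q g) = fun _ => (1 : ℂ) := by
    funext g
    simp [χ, Finset.sum_ite_eq]
  have hcardμ : (Fintype.card (Γ ⧸ stabilizer Γ x) : ℂ) * M (χ (QuotientGroup.mk 1)) = 1 := by
    have h1 : M (fun g => ∑ q : (Γ ⧸ stabilizer Γ x), χ q g) = ∑ q : (Γ ⧸ stabilizer Γ x), M (χ q) :=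
      aux_Msum M hadd hsmul Finset.univ χ χbd
    rw [hsum1, hone] at h1
    have h2 : ∑ q : (Γ ⧸ stabilizer Γ x), M (χ q) = (Fintype.card (Γ ⧸ stabilizer Γ x) : ℂ) * M (χ (QuotientGroup.mk 1)) := by
      rw [Finset.sum_congr rfl fun q _ => hχinv q, Finset.sum_const, Finset.card_univ,
        nsmul_eq_mul]
    rw [← h2]
    exact h1.symm
  have hμ : M (χ (QuotientGroup.mk 1)) = (Fintype.card (Γ ⧸ stabilizer Γ x) : ℂ)⁻¹ :=
    eq_inv_of_mul_eq_one_left (by rw [mul_comm]; exact hcardμ)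
  -- conclude
  rw [hdecomp]
  have : ∀ q : (Γ ⧸ stabilizer Γ x), (fun g => φ (q.out • x) * χ q g) = (φ (q.out • x)) • χ q := by
    intro q; funext g; simp
  rw [aux_Msum M hadd hsmul Finset.univ (fun q => fun g => φ (q.out • x) * χ q g)
      (fun q => cχbd _ q)]
  calc ∑ q : (Γ ⧸ stabilizer Γ x), M (fun g => φ (q.out • x) * χ q g)
      = ∑ q : (Γ ⧸ stabilizer Γ x), φ (q.out • x) * (Fintype.card (Γ ⧸ stabilizer Γ x) : ℂ)⁻¹ := by
        refine Finset.sum_congr rfl fun q _ => ?_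
        rw [this q, hsmul _ _ (χbd q), hχinv q, hμ]
    _ = (Fintype.card (Γ ⧸ stabilizer Γ x) : ℂ)⁻¹ * ∑ q : (Γ ⧸ stabilizer Γ x), φ (q.out • x) := by
        rw [Finset.mul_sum]; exact Finset.sum_congr rfl fun q _ => mul_comm _ _
end

/-- For a uniformly continuous action with finite orbits of uniformly bounded cardinality on a
compact Hausdorff space: each `φ_x` factors through the orbit, any invariant mean on bounded
functions sends `φ_x` to the orbit average, and the orbit average is continuous in `x`. -/
theorem stmt10 {Γ X : Type*} [Group Γ] [TopologicalSpace X] [CompactSpace X] [T2Space X]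
    [MulAction Γ X] [ContinuousConstSMul Γ X]
    (N : ℕ)
    (hfin : ∀ x : X, (MulAction.orbit Γ x).Finite)
    (hN : ∀ x : X, Nat.card (MulAction.orbit Γ x) ≤ N)
    (hUC : ∀ x : X, ∀ W ∈ nhds x, ∃ V ∈ nhds x, ∀ g : Γ, g • x = x → ∀ y ∈ V, g • y ∈ W)
    (φ : C(X, ℂ)) :
    (∀ (x : X) (g h : Γ), g • x = h • x → φ (g • x) = φ (h • x)) ∧
    (∀ M : (Γ → ℂ) → ℂ,
      (∀ f₁ f₂ : Γ → ℂ, (∃ C, ∀ g, ‖f₁ g‖ ≤ C) → (∃ C, ∀ g, ‖f₂ g‖ ≤ C) →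
        M (f₁ + f₂) = M f₁ + M f₂) →
      (∀ (c : ℂ) (f : Γ → ℂ), (∃ C, ∀ g, ‖f g‖ ≤ C) → M (c • f) = c * M f) →
      (M (fun _ => 1) = 1) →
      (∀ (f : Γ → ℂ) (C : ℝ), (∀ g, ‖f g‖ ≤ C) → ‖M f‖ ≤ C) →
      (∀ (f : Γ → ℂ) (h : Γ), (∃ C, ∀ g, ‖f g‖ ≤ C) → M (fun g => f (h * g)) = M f) →
      ∀ x : X,
        M (fun g => φ (g • x)) =
          (((hfin x).toFinset.card : ℂ))⁻¹ * ∑ y ∈ (hfin x).toFinset, φ y) ∧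
    Continuous fun x : X =>
      (((hfin x).toFinset.card : ℂ))⁻¹ * ∑ y ∈ (hfin x).toFinset, φ y := by
  refine ⟨fun x g h hgh => by rw [hgh], fun M hadd hsmul hone hbound hinv x => ?_,
    aux_cont hfin hUC φ⟩
  have : Fintype (Γ ⧸ stabilizer Γ x) := aux_fintypeQ x (hfin x)
  rw [aux_card x (hfin x), aux_sum_orbit x (hfin x)]
  exact aux_mean x (hfin x) φ M hadd hsmul hone hinv
end

section
/- Let K be the Stone–Čech compactification βℕ of the natural numbers, let X = K × S¹ with S¹ the unit circle, and let ℤ act on X by n•(y, s) = (y, e^{iαπn}·s) for a fixed irrational α, acting trivially on K. Then this action is Lyapunov stable with respect to the unique uniform structure on the compact Hausdorff space X, and the algebra of continuous ℤ-invariant functions on X is isomorphic (as a C*-algebra) to C(K). -/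
/-- The `ℤ`-action on `βℕ × S¹` rotating the circle by the angle `απ` and fixing the first
coordinate. -/
noncomputable def rotAct (α : ℝ) (n : ℤ) (p : StoneCech ℕ × Circle) : StoneCech ℕ × Circle :=
  (p.1, Circle.exp (α * Real.pi * n) * p.2)

/-- The unique uniform structure on the compact Hausdorff space `βℕ`. -/
noncomputable instance : UniformSpace (StoneCech ℕ) := uniformSpaceOfCompactR1

/-- The star subalgebra of `ℤ`-invariant continuous functions on `βℕ × S¹`. -/
noncomputable def invariantFns (α : ℝ) : StarSubalgebra ℂ C(StoneCech ℕ × Circle, ℂ) where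
  carrier := {φ | ∀ (n : ℤ) (p : StoneCech ℕ × Circle), φ (rotAct α n p) = φ p}
  mul_mem' := by
    intro a b ha hb n p
    simp only [ContinuousMap.mul_apply, ha n p, hb n p]
  add_mem' := by
    intro a b ha hb n p
    simp only [ContinuousMap.add_apply, ha n p, hb n p]
  algebraMap_mem' := by
    intro c n p
    simp
  star_mem' := by
    intro a ha n p
    simp only [ContinuousMap.star_apply, ha n p]

lemma circle_dist_mul (c x y : Circle) : dist (c * x) (c * y) = dist x y := by
  have h : dist (c * x) (c * y) = dist ((c : ℂ) * (x : ℂ)) ((c : ℂ) * (y : ℂ)) := rfl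
  have h2 : dist x y = dist (x : ℂ) (y : ℂ) := rfl
  rw [h, h2, dist_eq_norm, dist_eq_norm, ← mul_sub, norm_mul]
  simp [Circle.norm_coe]

lemma dense_exp_orbit (α : ℝ) (hα : Irrational α) :
    Dense (Set.range fun n : ℤ => Circle.exp (α * Real.pi * n)) := by
  have hd : Dense ((AddSubgroup.closure {α * Real.pi, 2 * Real.pi} : AddSubgroup ℝ) : Set ℝ) := by
    rcases AddSubgroup.dense_or_cyclic (AddSubgroup.closure {α * Real.pi, 2 * Real.pi}) with
      h | ⟨a, ha⟩
    · exact h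
    · exfalso
      have h1 : α * Real.pi ∈ AddSubgroup.closure ({α * Real.pi, 2 * Real.pi} : Set ℝ) :=
        AddSubgroup.subset_closure (by simp)
      have h2 : 2 * Real.pi ∈ AddSubgroup.closure ({α * Real.pi, 2 * Real.pi} : Set ℝ) :=
        AddSubgroup.subset_closure (by simp)
      rw [ha, AddSubgroup.mem_closure_singleton] at h1 h2
      obtain ⟨m, hm⟩ := h1
      obtain ⟨k, hk⟩ := h2
      have hπ := Real.pi_ne_zero
      have hk0 : (k : ℝ) ≠ 0 := by
        rintro h
        rw [zsmul_eq_mul, h, zero_mul] at hk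
        exact hπ (by linarith)
      rw [zsmul_eq_mul] at hm hk
      have ha0 : a ≠ 0 := by
        rintro rfl
        rw [mul_zero] at hk
        linarith [Real.pi_pos]
      have key : α * k = 2 * m := by
        have h3 : α * (k : ℝ) * a = 2 * (m : ℝ) * a := by
          calc α * (k : ℝ) * a = α * ((k : ℝ) * a) := by ring
          _ = α * (2 * Real.pi) := by rw [hk]
          _ = 2 * (α * Real.pi) := by ring
          _ = 2 * ((m : ℝ) * a) := by rw [hm]
          _ = 2 * (m : ℝ) * a := by ring
        exact mul_right_cancel₀ ha0 h3
      refine hα ⟨(2 * m) / k, ?_⟩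
      push_cast
      rw [div_eq_iff hk0]
      linarith [key]
  have hsurj : Function.Surjective Circle.exp := fun z => ⟨Complex.arg z, Circle.exp_arg z⟩
  have himg : Dense (Circle.exp ''
      ((AddSubgroup.closure {α * Real.pi, 2 * Real.pi} : AddSubgroup ℝ) : Set ℝ)) :=
    hsurj.denseRange.dense_image Circle.exp.continuous hd
  refine himg.mono ?_
  rintro _ ⟨x, hx, rfl⟩
  rw [SetLike.mem_coe, AddSubgroup.mem_closure_pair] at hx
  obtain ⟨m, n, rfl⟩ := hx
  refine ⟨m, ?_⟩
  rw [Circle.exp_add]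
  simp only [zsmul_eq_mul]
  rw [show ((n : ℝ) * (2 * Real.pi)) = (n : ℝ) * (2 * Real.pi) from rfl]
  rw [Circle.exp_int_mul_two_pi, mul_one, mul_comm (m : ℝ)]

lemma invariant_const {α : ℝ} (hα : Irrational α) (φ : C(StoneCech ℕ × Circle, ℂ))
    (hφ : ∀ (n : ℤ) (p : StoneCech ℕ × Circle), φ (rotAct α n p) = φ p)
    (y : StoneCech ℕ) (s : Circle) : φ (y, s) = φ (y, 1) := by
  have hC : IsClosed {t : Circle | φ (y, t) = φ (y, 1)} :=
    isClosed_eq (φ.continuous.comp (Continuous.prodMk_right y)) continuous_const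
  have hsub : Set.range (fun n : ℤ => Circle.exp (α * Real.pi * n)) ⊆
      {t : Circle | φ (y, t) = φ (y, 1)} := by
    rintro _ ⟨n, rfl⟩
    have := hφ n (y, 1)
    simpa [rotAct] using this
  have : (Set.univ : Set Circle) ⊆ {t : Circle | φ (y, t) = φ (y, 1)} := by
    rw [← (dense_exp_orbit α hα).closure_eq]
    exact closure_minimal hsub hC
  exact this (Set.mem_univ s)

/-- The irrational rotation action of `ℤ` on `X = βℕ × S¹` is Lyapunov stable, and the algebra
of continuous invariant functions is isomorphic, as a C*-algebra, to `C(βℕ)`. -/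
theorem stmt11 (α : ℝ) (hα : Irrational α) :
    (∀ U ∈ uniformity (StoneCech ℕ × Circle), ∃ V ∈ uniformity (StoneCech ℕ × Circle),
      ∀ (n : ℤ) (p q : StoneCech ℕ × Circle), (p, q) ∈ V → (rotAct α n p, rotAct α n q) ∈ U) ∧
    Nonempty ((invariantFns α) ≃⋆ₐ[ℂ] C(StoneCech ℕ, ℂ)) := by
  constructor
  · intro U hU
    rw [uniformity_prod, Filter.mem_inf_iff] at hU
    obtain ⟨t₁, ht₁, t₂, ht₂, rfl⟩ := hU
    obtain ⟨U₁, hU₁, hU₁s⟩ := Filter.mem_comap.1 ht₁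
    obtain ⟨U₂, hU₂, hU₂s⟩ := Filter.mem_comap.1 ht₂
    obtain ⟨ε, ε0, hε⟩ := Metric.mem_uniformity_dist.1 hU₂
    refine ⟨(fun p : (StoneCech ℕ × Circle) × StoneCech ℕ × Circle => (p.1.1, p.2.1)) ⁻¹' U₁ ∩
      (fun p : (StoneCech ℕ × Circle) × StoneCech ℕ × Circle => (p.1.2, p.2.2)) ⁻¹'
        {x : Circle × Circle | dist x.1 x.2 < ε}, ?_, ?_⟩
    · rw [uniformity_prod]
      exact Filter.inter_mem (Filter.mem_inf_of_left (Filter.preimage_mem_comap hU₁))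
        (Filter.mem_inf_of_right (Filter.preimage_mem_comap
          (Metric.dist_mem_uniformity ε0)))
    · rintro n p q ⟨h1, h2⟩
      constructor
      · exact hU₁s h1
      · apply hU₂s
        show (Circle.exp (α * Real.pi * n) * p.2, Circle.exp (α * Real.pi * n) * q.2) ∈ U₂
        exact hε (by rw [circle_dist_mul]; exact h2)
  · refine ⟨{
      toFun := fun φ => (φ : C(StoneCech ℕ × Circle, ℂ)).comp
        ⟨fun y => (y, 1), continuous_id.prodMk continuous_const⟩
      invFun := fun ψ => ⟨ψ.comp ⟨Prod.fst, continuous_fst⟩, fun n p => rfl⟩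
      left_inv := fun φ => ?_
      right_inv := fun ψ => rfl
      map_mul' := fun φ ψ => rfl
      map_add' := fun φ ψ => rfl
      map_smul' := fun c φ => rfl
      map_star' := fun φ => rfl }⟩
    apply Subtype.ext
    ext p
    exact (invariant_const hα φ.1 φ.2 p.1 p.2).symm
end

section
/- Let D = ∏_{k=1}^∞ D_k where each D_k is a two-point discrete space, let G = ⊕_{k=1}^∞ ℤ/2 act on D coordinatewise, and let p_n : G → G be the projection onto the first n coordinates. Define an action β of G on X = J × D, where J = {0} ∪ {1/n : n ≥ 1}, by β_g(1/n, d) = (1/n, p_n(g)•d) and β_g(0, d) = (0, g•d). Then: (a) the orbit of any point (1/n, d) is finite of cardinality 2ⁿ; (b) the orbit of any point (0, d) is infinite; (c) the action β is by homeomorphisms and is Lyapunov stable with respect to the metric on X obtained from the product metric where the two points of D_k are at distance 2^{−k}. -/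
open Filter

noncomputable instance cantorMetric : MetricSpace (ℕ → Bool) := PiNat.metricSpace

def Jset : Set ℝ := {x : ℝ | x = 0 ∨ ∃ n : ℕ, x = 1 / (n + 1)}

namespace Stmt16Aux

theorem cdist_eq_of_ne {x y : ℕ → Bool} (h : x ≠ y) :
    dist x y = (1 / 2 : ℝ) ^ PiNat.firstDiff x y := PiNat.dist_eq_of_ne h

theorem firstDiff_le {a b : ℕ → Bool} {n : ℕ} (h : a n ≠ b n) : PiNat.firstDiff a b ≤ n := by
  by_contra hc
  exact h (PiNat.apply_eq_of_lt_firstDiff (not_le.1 hc))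

/-- Lemma A: if pointwise agreement transfers, distances agree. -/
theorem dist_congr {a b c d : ℕ → Bool} (h : ∀ i, a i = b i ↔ c i = d i) :
    dist c d = dist a b := by
  rcases eq_or_ne a b with rfl | hab
  · have : c = d := funext fun i => (h i).1 rfl
    simp [this]
  · have hcd : c ≠ d := by
      intro he
      exact hab (funext fun i => (h i).2 (by rw [he]))
    rw [cdist_eq_of_ne hab, cdist_eq_of_ne hcd]
    congr 1
    apply le_antisymm
    · exact firstDiff_le (fun he => PiNat.apply_firstDiff_ne hab ((h _).2 he))
    · exact firstDiff_le (fun he => PiNat.apply_firstDiff_ne hcd ((h _).1 he))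

/-- Lemma B: distance bound when agreement transfers below `n`. -/
theorem dist_le_max {a b c d : ℕ → Bool} {n : ℕ} (h : ∀ i < n, (a i = b i ↔ c i = d i)) :
    dist c d ≤ max (dist a b) ((1 / 2 : ℝ) ^ n) := by
  rcases eq_or_ne c d with rfl | hcd
  · simp only [dist_self]
    exact le_max_of_le_right (by positivity)
  · rw [cdist_eq_of_ne hcd]
    rcases lt_or_ge (PiNat.firstDiff c d) n with hk | hk
    · have hne : a (PiNat.firstDiff c d) ≠ b (PiNat.firstDiff c d) := by
        intro he
        exact PiNat.apply_firstDiff_ne hcd ((h _ hk).1 he)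
      have hab : a ≠ b := fun he => hne (by rw [he])
      refine le_max_of_le_left ?_
      rw [cdist_eq_of_ne hab]
      exact pow_le_pow_of_le_one (by norm_num) (by norm_num) (firstDiff_le hne)
    · exact le_max_of_le_right (pow_le_pow_of_le_one (by norm_num) (by norm_num) hk)

theorem ite_not_eq_xor (P : Prop) [Decidable P] (b : Bool) :
    (if P then !b else b) = xor (decide P) b := by
  by_cases h : P <;> simp [h]

/-- flips are isometries -/
theorem flip_dist (s : ℕ → Bool) (a b : ℕ → Bool) :
    dist (fun k => xor (s k) (a k)) (fun k => xor (s k) (b k)) = dist a b :=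
  dist_congr (fun i => by cases s i <;> simp)

theorem flip_cont (s : ℕ → Bool) : Continuous (fun d : ℕ → Bool => fun k => xor (s k) (d k)) := by
  have : Isometry (fun d : ℕ → Bool => fun k => xor (s k) (d k)) :=
    Isometry.of_dist_eq (fun a b => flip_dist s a b)
  exact this.continuous

/-- isolation of 1/(n+1) in Jset -/
theorem isol (n : ℕ) (x : ℝ) (hx : x = 0 ∨ ∃ m : ℕ, x = 1 / (m + 1))
    (h : |x - 1 / (n + 1)| < 1 / (((n : ℝ) + 1) * ((n : ℝ) + 2))) : x = 1 / (n + 1) := by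
  have hn1 : (0:ℝ) < (n:ℝ) + 1 := by positivity
  have hn2 : (0:ℝ) < (n:ℝ) + 2 := by positivity
  rcases hx with rfl | ⟨m, rfl⟩
  · exfalso
    rw [abs_sub_comm, sub_zero, abs_of_pos (by positivity)] at h
    rw [div_lt_div_iff₀ (by positivity) (by positivity)] at h
    nlinarith
  · congr 1
    have hm1 : (0:ℝ) < (m:ℝ) + 1 := by positivity
    rcases lt_trichotomy m n with hmn | rfl | hmn
    · exfalso
      have hmc : (m:ℝ) + 1 ≤ (n:ℝ) := by exact_mod_cast hmn
      have hlt : 1 / ((n:ℝ) + 1) < 1 / ((m:ℝ) + 1) :=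
        one_div_lt_one_div_of_lt hm1 (by linarith)
      rw [abs_of_pos (by linarith)] at h
      rw [div_sub_div _ _ (ne_of_gt hm1) (ne_of_gt hn1), div_lt_div_iff₀ (by positivity) (by positivity)] at h
      nlinarith [mul_pos hn1 hn2, mul_pos hm1 hn1, mul_pos hm1 hn2]
    · rfl
    · exfalso
      have hmc : (n:ℝ) + 1 ≤ (m:ℝ) := by exact_mod_cast hmn
      have hlt : 1 / ((m:ℝ) + 1) < 1 / ((n:ℝ) + 1) :=
        one_div_lt_one_div_of_lt hn1 (by linarith)
      rw [abs_sub_comm, abs_of_pos (by linarith)] at h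
      rw [div_sub_div _ _ (ne_of_gt hn1) (ne_of_gt hm1), div_lt_div_iff₀ (by positivity) (by positivity)] at h
      nlinarith [mul_nonneg (by linarith : (0:ℝ) ≤ (m:ℝ) - n - 1) (le_of_lt hn1)]

end Stmt16Aux
/-- The action `β` of `G = ⊕_k ℤ/2` on `X = J × D`: over the point `1/(n+1)` only the first
`n+1` coordinates of `g` act (the projection `p_{n+1}(g)` flips coordinates), while over `0`
all of `g` acts.  Then: (a) the orbit of a point over `1/(n+1)` is finite of cardinality
`2^{n+1}`; (b) the orbit of a point over `0` is infinite; (c) the action is by homeomorphisms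
(each `β g` is continuous, hence a homeomorphism with inverse `β g`) and is Lyapunov stable
for the product metric. -/
theorem stmt16
    (β : (ℕ →₀ ZMod 2) → Jset × (ℕ → Bool) → Jset × (ℕ → Bool))
    (hβ0 : ∀ (g : ℕ →₀ ZMod 2) (p : Jset × (ℕ → Bool)), (p.1 : ℝ) = 0 →
      β g p = (p.1, fun k => if g k = 1 then !(p.2 k) else p.2 k))
    (hβn : ∀ (g : ℕ →₀ ZMod 2) (p : Jset × (ℕ → Bool)) (n : ℕ), (p.1 : ℝ) = 1 / (n + 1) →
      β g p = (p.1, fun k => if k < n + 1 ∧ g k = 1 then !(p.2 k) else p.2 k)) :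
    (∀ (p : Jset × (ℕ → Bool)) (n : ℕ), (p.1 : ℝ) = 1 / (n + 1) →
      Nat.card (Set.range fun g => β g p) = 2 ^ (n + 1)) ∧
    (∀ p : Jset × (ℕ → Bool), (p.1 : ℝ) = 0 →
      (Set.range fun g => β g p).Infinite) ∧
    (∀ g : ℕ →₀ ZMod 2, Continuous (β g)) ∧
    (∀ ε > (0 : ℝ), ∀ x : Jset × (ℕ → Bool), ∃ δ > (0 : ℝ),
      ∀ (g : ℕ →₀ ZMod 2) (y : Jset × (ℕ → Bool)),
        dist x y < δ → dist (β g x) (β g y) < ε) := by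
  refine ⟨?_, ?_, ?_, ?_⟩
  · -- (a) finite orbits of cardinality 2^(n+1)
    intro p n hp
    set φ : (Fin (n+1) → Bool) → Jset × (ℕ → Bool) := fun b =>
      (p.1, fun k => if h : k < n+1 then xor (b ⟨k, h⟩) (p.2 k) else p.2 k) with hφ
    have hinj : Function.Injective φ := by
      intro b b' he
      funext i
      have h1 := congrFun (congrArg Prod.snd he) (i : ℕ)
      simp only [hφ, dif_pos i.isLt, Fin.eta] at h1
      revert h1
      cases p.2 (i : ℕ) <;> cases hb : b i <;> cases hb' : b' i <;> simp
    have hr : (Set.range fun g => β g p) = Set.range φ := by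
      apply Set.Subset.antisymm
      · rintro _ ⟨g, rfl⟩
        refine ⟨fun i => decide (g i = 1), ?_⟩
        beta_reduce
        rw [hβn g p n hp]
        refine Prod.ext rfl (funext fun k => ?_)
        by_cases hk : k < n+1
        · simp only [hφ, dif_pos hk]
          by_cases hg : g k = 1 <;> simp [hk, hg]
        · simp only [hφ, dif_neg hk]
          simp [hk]
      · rintro _ ⟨b, rfl⟩
        refine ⟨Finsupp.onFinset (Finset.range (n+1))
          (fun k => if h : k < n+1 then (if b ⟨k, h⟩ then 1 else 0) else 0)
          (fun k hk => by
            rw [Finset.mem_range]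
            by_contra hc
            exact hk (dif_neg hc)), ?_⟩
        beta_reduce
        rw [hβn _ p n hp]
        refine Prod.ext rfl (funext fun k => ?_)
        simp only [Finsupp.onFinset_apply]
        by_cases hk : k < n+1
        · by_cases hb : b ⟨k, hk⟩
          · simp [hφ, hk, hb, Nat.lt_add_one_iff.mp hk]
          · simp [hφ, hk, hb, (by decide : (0 : ZMod 2) ≠ 1)]
        · simp [hφ, hk]
          intro h; omega
    rw [hr, Nat.card_range_of_injective hinj, Nat.card_eq_fintype_card]
    simp
  · -- (b) infinite orbits over 0
    intro p hp
    have hinj : Function.Injective (fun g => β g p) := by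
      intro g g' he
      simp only [hβ0 g p hp, hβ0 g' p hp] at he
      have h2 := congrArg Prod.snd he
      ext k
      have h3 := congrFun h2 k
      have hz : ∀ z : ZMod 2, z = 0 ∨ z = 1 := by decide
      rcases hz (g k) with h1 | h1 <;> rcases hz (g' k) with h1' | h1' <;>
        simp only [h1, h1'] at h3 ⊢ <;>
        simp_all
    exact Set.infinite_range_of_injective hinj
  · -- (c) continuity
    intro g
    obtain ⟨N, hNsub⟩ := (Finsupp.support g).exists_nat_subset_range
    have hN : ∀ k, g k = 1 → k < N + 1 := by
      intro k hk
      have hmem : k ∈ g.support := Finsupp.mem_support_iff.2 (by rw [hk]; decide)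
      exact (Finset.mem_range.1 (hNsub hmem)).trans (Nat.lt_succ_self N)
    rw [continuous_iff_continuousAt]
    intro p
    rcases (p.1.2 : (p.1 : ℝ) = 0 ∨ ∃ n : ℕ, (p.1 : ℝ) = 1 / (n + 1)) with hp | ⟨n, hp⟩
    · -- over 0: β g agrees near p with the full flip
      set s : ℕ → Bool := fun k => decide (g k = 1) with hs
      have hcont : Continuous (fun q : Jset × (ℕ → Bool) =>
          ((q.1, fun k => xor (s k) (q.2 k)) : Jset × (ℕ → Bool))) :=
        continuous_fst.prodMk ((Stmt16Aux.flip_cont s).comp continuous_snd)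
      have hUopen : IsOpen {q : Jset × (ℕ → Bool) | (q.1 : ℝ) < 1 / (N + 1)} :=
        (isOpen_Iio (a := (1 : ℝ) / (N + 1))).preimage
          (continuous_subtype_val.comp continuous_fst)
      have hpU : p ∈ {q : Jset × (ℕ → Bool) | (q.1 : ℝ) < 1 / (N + 1)} := by
        simp only [Set.mem_setOf_eq, hp]
        positivity
      refine hcont.continuousAt.congr (eventuallyEq_of_mem (hUopen.mem_nhds hpU) ?_)
      intro q hq
      rcases (q.1.2 : (q.1 : ℝ) = 0 ∨ ∃ m : ℕ, (q.1 : ℝ) = 1 / (m + 1)) with hq0 | ⟨m, hqm⟩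
      · rw [hβ0 g q hq0]
        refine Prod.ext rfl (funext fun k => ?_)
        by_cases hg : g k = 1 <;> simp [hs, hg]
      · rw [hβn g q m hqm]
        have hm : N + 1 ≤ m + 1 := by
          have hq' : (1 : ℝ) / (m + 1) < 1 / (N + 1) := hqm ▸ hq
          have h2 : ((N : ℝ) + 1) < (m : ℝ) + 1 := by
            by_contra hc
            push_neg at hc
            exact absurd hq' (not_lt.2 (one_div_le_one_div_of_le (by positivity) hc))
          have : N + 1 < m + 1 := by exact_mod_cast h2
          omega
        refine Prod.ext rfl (funext fun k => ?_)
        by_cases hg : g k = 1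
        · have hk : k < m + 1 := lt_of_lt_of_le (hN k hg) hm
          simp [hs, hg, hk]
        · simp [hs, hg]
    · -- over 1/(n+1): isolated fiber
      set s : ℕ → Bool := fun k => decide (k < n + 1 ∧ g k = 1) with hs
      have hcont : Continuous (fun q : Jset × (ℕ → Bool) =>
          ((q.1, fun k => xor (s k) (q.2 k)) : Jset × (ℕ → Bool))) :=
        continuous_fst.prodMk ((Stmt16Aux.flip_cont s).comp continuous_snd)
      set c : ℝ := 1 / (((n : ℝ) + 1) * ((n : ℝ) + 2)) with hc
      have hUopen : IsOpen {q : Jset × (ℕ → Bool) | |(q.1 : ℝ) - 1 / (n + 1)| < c} := by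
        have : Continuous (fun q : Jset × (ℕ → Bool) => |(q.1 : ℝ) - 1 / (n + 1)|) :=
          ((continuous_subtype_val.comp continuous_fst).sub continuous_const).abs
        exact (isOpen_Iio (a := c)).preimage this
      have hpU : p ∈ {q : Jset × (ℕ → Bool) | |(q.1 : ℝ) - 1 / (n + 1)| < c} := by
        simp only [Set.mem_setOf_eq, hp, sub_self, abs_zero, hc]
        positivity
      refine hcont.continuousAt.congr (eventuallyEq_of_mem (hUopen.mem_nhds hpU) ?_)
      intro q hq
      have hq1 : (q.1 : ℝ) = 1 / (n + 1) := Stmt16Aux.isol n q.1 q.1.2 hq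
      rw [hβn g q n hq1]
      refine Prod.ext rfl (funext fun k => ?_)
      by_cases h1 : k < n + 1 <;> by_cases h2 : g k = 1 <;> simp only [hs, h1, h2, true_and, false_and, and_true, and_false, if_true, if_false, decide_true, decide_false] <;> simp
  · -- (d) Lyapunov stability
    intro ε hε x
    rcases (x.1.2 : (x.1 : ℝ) = 0 ∨ ∃ n : ℕ, (x.1 : ℝ) = 1 / (n + 1)) with hx | ⟨n, hx⟩
    · obtain ⟨K, hK⟩ := exists_pow_lt_of_lt_one hε (by norm_num : (1 / 2 : ℝ) < 1)
      refine ⟨min ε (1 / (K + 1)), lt_min hε (by positivity), ?_⟩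
      intro g y hd
      have hd1 : dist x.1 y.1 < min ε (1 / (K + 1)) :=
        lt_of_le_of_lt (by rw [Prod.dist_eq]; exact le_max_left _ _) hd
      have hd2 : dist x.2 y.2 < min ε (1 / (K + 1)) :=
        lt_of_le_of_lt (by rw [Prod.dist_eq]; exact le_max_right _ _) hd
      rw [hβ0 g x hx]
      rcases (y.1.2 : (y.1 : ℝ) = 0 ∨ ∃ m : ℕ, (y.1 : ℝ) = 1 / (m + 1)) with hy | ⟨m, hy⟩
      · rw [hβ0 g y hy, Prod.dist_eq]
        apply max_lt (lt_of_lt_of_le hd1 (min_le_left _ _))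
        have heq : dist (fun k => if g k = 1 then !(x.2 k) else x.2 k)
            (fun k => if g k = 1 then !(y.2 k) else y.2 k) = dist x.2 y.2 :=
          Stmt16Aux.dist_congr (fun i => by by_cases hg : g i = 1 <;> simp [hg])
        exact heq ▸ lt_of_lt_of_le hd2 (min_le_left _ _)
      · rw [hβn g y m hy, Prod.dist_eq]
        apply max_lt (lt_of_lt_of_le hd1 (min_le_left _ _))
        have hy1 : dist x.1 y.1 = 1 / ((m : ℝ) + 1) := by
          rw [Subtype.dist_eq, Real.dist_eq, hx, hy]
          rw [zero_sub, abs_neg, abs_of_pos (by positivity)]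
        have hmK : K ≤ m + 1 := by
          have h1 : (1 : ℝ) / (m + 1) < 1 / (K + 1) :=
            hy1 ▸ lt_of_lt_of_le hd1 (min_le_right _ _)
          have h2 : ((K : ℝ) + 1) < (m : ℝ) + 1 := by
            by_contra hc
            push_neg at hc
            exact absurd h1 (not_lt.2 (one_div_le_one_div_of_le (by positivity) hc))
          have : K + 1 < m + 1 := by exact_mod_cast h2
          omega
        refine lt_of_le_of_lt (Stmt16Aux.dist_le_max (n := m + 1)
          (a := x.2) (b := y.2) ?_) ?_
        · intro i hi
          by_cases hg : g i = 1 <;> simp [hg, hi]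
        · apply max_lt (lt_of_lt_of_le hd2 (min_le_left _ _))
          calc (1 / 2 : ℝ) ^ (m + 1) ≤ (1 / 2 : ℝ) ^ K :=
                pow_le_pow_of_le_one (by norm_num) (by norm_num) hmK
            _ < ε := hK
    · refine ⟨min ε (1 / (((n : ℝ) + 1) * ((n : ℝ) + 2))), lt_min hε (by positivity), ?_⟩
      intro g y hd
      have hd1 : dist x.1 y.1 < min ε (1 / (((n : ℝ) + 1) * ((n : ℝ) + 2))) :=
        lt_of_le_of_lt (by rw [Prod.dist_eq]; exact le_max_left _ _) hd
      have hd2 : dist x.2 y.2 < min ε (1 / (((n : ℝ) + 1) * ((n : ℝ) + 2))) :=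
        lt_of_le_of_lt (by rw [Prod.dist_eq]; exact le_max_right _ _) hd
      have hy1 : (y.1 : ℝ) = 1 / (n + 1) := by
        apply Stmt16Aux.isol n y.1 y.1.2
        have : |(y.1 : ℝ) - 1 / (n + 1)| = dist x.1 y.1 := by
          rw [Subtype.dist_eq, Real.dist_eq, hx, abs_sub_comm]
        rw [this]
        exact lt_of_lt_of_le hd1 (min_le_right _ _)
      rw [hβn g x n hx, hβn g y n hy1, Prod.dist_eq]
      apply max_lt (lt_of_lt_of_le hd1 (min_le_left _ _))
      have heq : dist (fun k => if k < n + 1 ∧ g k = 1 then !(x.2 k) else x.2 k)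
          (fun k => if k < n + 1 ∧ g k = 1 then !(y.2 k) else y.2 k) = dist x.2 y.2 :=
        Stmt16Aux.dist_congr (fun i => by by_cases hg : i < n + 1 ∧ g i = 1 <;> simp only [hg, if_true, if_false] <;> simp)
      exact heq ▸ lt_of_lt_of_le hd2 (min_le_left _ _)
end

section
/- Let Γ be a group acting on a set S, and suppose f : Γ → ℂ is a bounded function of the form f(g) = φ(g•x) where the set of translates {h ↦ f(gh) : g ∈ Γ} is totally bounded in sup norm (f is almost periodic). Then there is exactly one left-invariant mean value: if M₁ and M₂ are two means on the space AP(Γ) of almost periodic functions on Γ (positive linear functionals with M(1) = 1) that are both left- and right-invariant, then M₁(f) = M₂(f) for every almost periodic f. -/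
open Finset Set Uniformity

/-- A bounded function `f : Γ → ℂ` is almost periodic if its set of left translates is totally
bounded with respect to the uniform (sup-norm) structure. -/
def IsAlmostPeriodic {Γ : Type*} [Group Γ] (f : Γ → ℂ) : Prop :=
  (∃ C : ℝ, ∀ g, ‖f g‖ ≤ C) ∧
    TotallyBounded {F : UniformFun Γ ℂ | ∃ g : Γ, F = UniformFun.ofFun fun h => f (g * h)}

namespace VNM

variable {Γ : Type*} [Group Γ]

lemma norm_sub_le₃ {a b c d : ℂ} (h1 : ‖a - b‖ ≤ ε) (h2 : ‖b - c‖ ≤ ε) (h3 : ‖c - d‖ ≤ ε) :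
    ‖a - d‖ ≤ ε + ε + ε := by
  have h : a - d = (a - b) + ((b - c) + (c - d)) := by ring
  rw [h]
  have t1 := norm_add_le (a - b) ((b - c) + (c - d))
  have t2 := norm_add_le (b - c) (c - d)
  linarith

lemma norm_sub_le₅ {a b c d e g : ℂ} (h1 : ‖a - b‖ ≤ ε) (h2 : ‖b - c‖ ≤ ε) (h3 : ‖c - d‖ ≤ ε)
    (h4 : ‖d - e‖ ≤ ε) (h5 : ‖e - g‖ ≤ ε) : ‖a - g‖ ≤ ε + ε + ε + ε + ε := by
  have h : a - g = (a - b) + ((b - c) + ((c - d) + ((d - e) + (e - g)))) := by ring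
  rw [h]
  have t1 := norm_add_le (a - b) ((b - c) + ((c - d) + ((d - e) + (e - g))))
  have t2 := norm_add_le (b - c) ((c - d) + ((d - e) + (e - g)))
  have t3 := norm_add_le (c - d) ((d - e) + (e - g))
  have t4 := norm_add_le (d - e) (e - g)
  linarith

/-- Extract a concrete finite left ε-net of translates from almost periodicity. -/
lemma leftNet {f : Γ → ℂ} (hf : IsAlmostPeriodic f) {ε : ℝ} (hε : 0 < ε) :
    ∃ P : Finset Γ, ∀ a : Γ, ∃ p ∈ P, ∀ h, ‖f (a * h) - f (p * h)‖ ≤ ε := by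
  classical
  have hV : {p : ℂ × ℂ | dist p.1 p.2 ≤ ε} ∈ 𝓤 ℂ := by
    refine Filter.mem_of_superset (Metric.dist_mem_uniformity hε) ?_
    intro p hp
    simp only [Set.mem_setOf_eq] at hp ⊢
    exact le_of_lt hp
  have hU : UniformFun.gen Γ ℂ {p : ℂ × ℂ | dist p.1 p.2 ≤ ε} ∈ 𝓤 (UniformFun Γ ℂ) :=
    (UniformFun.hasBasis_uniformity Γ ℂ).mem_of_mem hV
  obtain ⟨t, hts, htf, hcov⟩ := hf.2.exists_subset hU
  -- pick a translate-witness for each element of t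
  let pick : UniformFun Γ ℂ → Γ := fun F =>
    if h : ∃ g : Γ, F = UniformFun.ofFun fun h' => f (g * h') then h.choose else 1
  refine ⟨htf.toFinset.image pick, fun a => ?_⟩
  have haS : (UniformFun.ofFun fun h => f (a * h)) ∈
      {F : UniformFun Γ ℂ | ∃ g : Γ, F = UniformFun.ofFun fun h => f (g * h)} := ⟨a, rfl⟩
  obtain ⟨y, hyt, hy⟩ := Set.mem_iUnion₂.1 (hcov haS)
  have hyS : ∃ g : Γ, y = UniformFun.ofFun fun h' => f (g * h') := hts hyt
  refine ⟨pick y, Finset.mem_image.2 ⟨y, htf.mem_toFinset.2 hyt, rfl⟩, fun h => ?_⟩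
  have hyeq : y = UniformFun.ofFun fun h' => f (pick y * h') := by
    simpa [pick, hyS] using hyS.choose_spec
  have := hy h
  rw [hyeq] at this
  simpa [dist_eq_norm] using this


/-- A finite net, with representatives in the range, for a bounded family of vectors. -/
lemma finite_net {ι : Type*} [Fintype ι] (V : Γ → ι → ℂ) (C : ℝ)
    (hV : ∀ x i, ‖V x i‖ ≤ C) {ε : ℝ} (hε : 0 < ε) :
    ∃ R : Finset Γ, ∀ x : Γ, ∃ y ∈ R, ∀ i, ‖V x i - V y i‖ ≤ ε := by
  classical
  rcases isEmpty_or_nonempty ι with hι | hι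
  · exact ⟨{1}, fun x => ⟨1, Finset.mem_singleton_self 1, fun i => (IsEmpty.false i).elim⟩⟩
  have hC : 0 ≤ C := le_trans (norm_nonneg _) (hV 1 (Classical.arbitrary ι))
  have hsub : Set.range V ⊆ Metric.closedBall (0 : ι → ℂ) C := by
    rintro _ ⟨x, rfl⟩
    rw [Metric.mem_closedBall, dist_zero_right]
    exact pi_norm_le_iff_of_nonneg hC |>.2 fun i => hV x i
  have htb : TotallyBounded (Set.range V) :=
    (isCompact_closedBall (0 : ι → ℂ) C).totallyBounded.subset hsub
  obtain ⟨t, hts, htf, hcov⟩ := htb.exists_subset (Metric.dist_mem_uniformity hε)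
  let pick : (ι → ℂ) → Γ := fun w => if h : ∃ x : Γ, V x = w then h.choose else 1
  refine ⟨htf.toFinset.image pick, fun x => ?_⟩
  obtain ⟨w, hwt, hw⟩ := Set.mem_iUnion₂.1 (hcov ⟨x, rfl⟩)
  have hwr : ∃ x : Γ, V x = w := hts hwt
  refine ⟨pick w, Finset.mem_image.2 ⟨w, htf.mem_toFinset.2 hwt, rfl⟩, fun i => ?_⟩
  have hweq : V (pick w) = w := by
    simpa [pick, hwr] using hwr.choose_spec
  have hd : dist (V x) w < ε := hw
  rw [← hweq] at hd
  have := (dist_le_pi_dist (V x) (V (pick w)) i).trans (le_of_lt hd)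
  simpa [dist_eq_norm] using this

/-- Right translates net: `∀ x ∃ y`, `f (a x) ≈ f (a y)` uniformly in `a`. -/
lemma rightNet {f : Γ → ℂ} (hf : IsAlmostPeriodic f) {ε : ℝ} (hε : 0 < ε) :
    ∃ Q : Finset Γ, ∀ x : Γ, ∃ q ∈ Q, ∀ a : Γ, ‖f (a * x) - f (a * q)‖ ≤ ε := by
  classical
  obtain ⟨C, hC⟩ := hf.1
  have hε3 : 0 < ε / 3 := by linarith
  obtain ⟨P, hP⟩ := leftNet hf hε3
  rcases P.eq_empty_or_nonempty with hPe | hPn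
  · obtain ⟨p, hp, -⟩ := hP 1
    simp [hPe] at hp
  obtain ⟨R, hR⟩ := finite_net (fun x (p : ↥P) => f ((p : Γ) * x)) C (fun x p => hC _) hε3
  refine ⟨R, fun x => ?_⟩
  obtain ⟨q, hqR, hq⟩ := hR x
  refine ⟨q, hqR, fun a => ?_⟩
  obtain ⟨p, hpP, hp⟩ := hP a
  have h1 : ‖f (a * x) - f (p * x)‖ ≤ ε / 3 := hp x
  have h2 : ‖f (p * x) - f (p * q)‖ ≤ ε / 3 := hq ⟨p, hpP⟩
  have h3 : ‖f (p * q) - f (a * q)‖ ≤ ε / 3 := by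
    have := hp q
    rwa [norm_sub_rev]
  have := norm_sub_le₃ h1 h2 h3
  linarith

/-- Two-sided net: `∀ x ∃ y`, `f (a x b) ≈ f (a y b)` uniformly in `a, b`. -/
lemma twoSidedNet {f : Γ → ℂ} (hf : IsAlmostPeriodic f) {ε : ℝ} (hε : 0 < ε) :
    ∃ T : Finset Γ, ∀ x : Γ, ∃ y ∈ T, ∀ a b : Γ, ‖f (a * x * b) - f (a * y * b)‖ ≤ ε := by
  classical
  obtain ⟨C, hC⟩ := hf.1
  have hε5 : 0 < ε / 5 := by linarith
  obtain ⟨P, hP⟩ := leftNet hf hε5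
  obtain ⟨Q, hQ⟩ := rightNet hf hε5
  rcases P.eq_empty_or_nonempty with hPe | hPn
  · obtain ⟨p, hp, -⟩ := hP 1
    simp [hPe] at hp
  rcases Q.eq_empty_or_nonempty with hQe | hQn
  · obtain ⟨q, hq, -⟩ := hQ 1
    simp [hQe] at hq
  obtain ⟨T, hT⟩ := finite_net (fun x (pq : ↥P × ↥Q) => f ((pq.1 : Γ) * x * (pq.2 : Γ))) C
    (fun x pq => hC _) hε5
  refine ⟨T, fun x => ?_⟩
  obtain ⟨y, hyT, hy⟩ := hT x
  refine ⟨y, hyT, fun a b => ?_⟩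
  obtain ⟨p, hpP, hp⟩ := hP a
  obtain ⟨q, hqQ, hq⟩ := hQ b
  have h1 : ‖f (a * x * b) - f (p * x * b)‖ ≤ ε / 5 := by
    have := hp (x * b)
    simpa [mul_assoc] using this
  have h2 : ‖f (p * x * b) - f (p * x * q)‖ ≤ ε / 5 := hq (p * x)
  have h3 : ‖f (p * x * q) - f (p * y * q)‖ ≤ ε / 5 := hy (⟨⟨p, hpP⟩, ⟨q, hqQ⟩⟩ : ↥P × ↥Q)
  have h4 : ‖f (p * y * q) - f (p * y * b)‖ ≤ ε / 5 := by
    have := hq (p * y)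
    rwa [norm_sub_rev]
  have h5 : ‖f (p * y * b) - f (a * y * b)‖ ≤ ε / 5 := by
    have := hp (y * b)
    rw [norm_sub_rev] at this
    simpa [mul_assoc] using this
  have := norm_sub_le₅ h1 h2 h3 h4 h5
  linarith


section Combo

universe u
variable {Γ : Type u} [Group Γ] {E : Type*} [SeminormedAddCommGroup E] [NormedSpace ℝ E]

/-- `u` is a convex combination of two-sided translates of `f`. -/
def IsCombo (f u : Γ → E) : Prop :=
  ∃ (ι : Type u) (s : Finset ι) (μ : ι → ℝ) (a b : ι → Γ),
    (∀ i ∈ s, 0 ≤ μ i) ∧ (∑ i ∈ s, μ i) = 1 ∧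
      ∀ h, u h = ∑ i ∈ s, μ i • f (a i * h * b i)

lemma convex_est {ι : Type*} (s : Finset ι) (μ : ι → ℝ) (t : ι → E) (c : E) {ε : ℝ}
    (h0 : ∀ i ∈ s, 0 ≤ μ i) (h1 : (∑ i ∈ s, μ i) = 1) (ht : ∀ i ∈ s, ‖t i - c‖ ≤ ε) :
    ‖(∑ i ∈ s, μ i • t i) - c‖ ≤ ε := by
  have hc : (∑ i ∈ s, μ i • t i) - c = ∑ i ∈ s, μ i • (t i - c) := by
    simp only [smul_sub, Finset.sum_sub_distrib, ← Finset.sum_smul, h1, one_smul]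
  rw [hc]
  calc ‖∑ i ∈ s, μ i • (t i - c)‖ ≤ ∑ i ∈ s, ‖μ i • (t i - c)‖ := norm_sum_le _ _
    _ ≤ ∑ i ∈ s, μ i * ε := by
        refine Finset.sum_le_sum fun i hi => ?_
        rw [norm_smul, Real.norm_eq_abs, abs_of_nonneg (h0 i hi)]
        exact mul_le_mul_of_nonneg_left (ht i hi) (h0 i hi)
    _ = ε := by rw [← Finset.sum_mul, h1, one_mul]

lemma combo_self (f : Γ → E) : IsCombo f f := by
  refine ⟨Γ, {1}, fun _ => 1, fun _ => 1, fun _ => 1, fun _ _ => zero_le_one, by simp, fun h => ?_⟩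
  simp

lemma combo_bound {f u : Γ → E} (hu : IsCombo f u) {C : ℝ} (hC : ∀ g, ‖f g‖ ≤ C) :
    ∀ h, ‖u h‖ ≤ C := by
  rintro h
  obtain ⟨ι, s, μ, a, b, h0, h1, huh⟩ := hu
  have := convex_est s μ (fun i => f (a i * h * b i)) 0 h0 h1 (fun i hi => by simpa using hC _)
  rw [huh h]
  simpa using this

lemma combo_net₂ {f u : Γ → E} (hu : IsCombo f u) {x y : Γ} {ε : ℝ}
    (hxy : ∀ a b : Γ, ‖f (a * x * b) - f (a * y * b)‖ ≤ ε) :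
    ∀ a b : Γ, ‖u (a * x * b) - u (a * y * b)‖ ≤ ε := by
  intro a b
  obtain ⟨ι, s, μ, A, B, h0, h1, huh⟩ := hu
  have hrw : ∀ g : Γ, u (a * g * b) = ∑ i ∈ s, μ i • f ((A i * a) * g * (b * B i)) := by
    intro g
    rw [huh (a * g * b)]
    refine Finset.sum_congr rfl fun i _ => ?_
    congr 1
    group
  rw [hrw x, hrw y, ← Finset.sum_sub_distrib]
  simp_rw [← smul_sub]
  have := convex_est s μ
    (fun i => f ((A i * a) * x * (b * B i)) - f ((A i * a) * y * (b * B i))) 0 h0 h1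
    (fun i hi => by simpa using hxy (A i * a) (b * B i))
  simpa using this

lemma combo_avg {f u : Γ → E} (hu : IsCombo f u) (T : Finset Γ) (hT : T.Nonempty) :
    IsCombo f (fun h => ∑ y ∈ T, ((T.card : ℝ))⁻¹ • u (y * h)) := by
  classical
  obtain ⟨ι, s, μ, a, b, h0, h1, huh⟩ := hu
  have hcard : (0 : ℝ) < T.card := by exact_mod_cast Finset.card_pos.2 hT
  refine ⟨Γ × ι, T ×ˢ s, fun p => (T.card : ℝ)⁻¹ * μ p.2, fun p => a p.2 * p.1,
    fun p => b p.2, ?_, ?_, ?_⟩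
  · rintro ⟨y, i⟩ hp
    have := h0 i (Finset.mem_product.1 hp).2
    positivity
  · rw [Finset.sum_product]
    simp only [← Finset.mul_sum, h1, mul_one]
    rw [Finset.sum_const, nsmul_eq_mul]
    field_simp
  · intro h
    rw [Finset.sum_product]
    refine Finset.sum_congr rfl fun y _ => ?_
    rw [huh (y * h), Finset.smul_sum]
    refine Finset.sum_congr rfl fun i _ => ?_
    simp [mul_smul, mul_assoc]

end Combo

section Core

universe u
variable {Γ : Type u} [Group Γ]

/-- The key (von Neumann) approximation: a convex combination of two-sided translates of an
almost periodic real function can be made uniformly close to a constant. -/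
lemma core (r : Γ → ℝ) (C : ℝ) (hC : ∀ g, |r g| ≤ C)
    (hnet : ∀ ε : ℝ, 0 < ε → ∃ T : Finset Γ, ∀ x : Γ, ∃ y ∈ T,
      ∀ a b : Γ, |r (a * x * b) - r (a * y * b)| ≤ ε)
    {ε : ℝ} (hε : 0 < ε) :
    ∃ u : Γ → ℝ, IsCombo r u ∧ ∃ c : ℝ, ∀ h, |u h - c| ≤ ε := by
  classical
  haveI : Nonempty Γ := ⟨1⟩
  have hC' : ∀ g, ‖r g‖ ≤ C := by simpa [Real.norm_eq_abs] using hC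
  have hba : ∀ u : Γ → ℝ, IsCombo r u → BddAbove (Set.range u) := by
    intro u hu
    refine ⟨C, ?_⟩
    rintro _ ⟨h, rfl⟩
    have hb := combo_bound hu hC' h
    rw [Real.norm_eq_abs] at hb
    exact (abs_le.1 hb).2
  have habs : ∀ u : Γ → ℝ, IsCombo r u → ∀ h, |u h| ≤ C := by
    intro u hu h
    simpa [Real.norm_eq_abs] using combo_bound hu hC' h
  set A : Set ℝ := {s | ∃ u : Γ → ℝ, IsCombo r u ∧ s = ⨆ h, u h} with hA
  have hAne : A.Nonempty := ⟨_, r, combo_self r, rfl⟩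
  have hAbb : BddBelow A := by
    refine ⟨-C, ?_⟩
    rintro _ ⟨u, hu, rfl⟩
    have h1 : u 1 ≤ ⨆ h, u h := le_ciSup (hba u hu) 1
    have h2 := (abs_le.1 (habs u hu 1)).1
    linarith
  set α := sInf A with hα
  have hαle : ∀ u : Γ → ℝ, IsCombo r u → α ≤ ⨆ h, u h := fun u hu =>
    csInf_le hAbb ⟨u, hu, rfl⟩
  have hε4 : 0 < ε / 4 := by linarith
  obtain ⟨T, hT⟩ := hnet (ε / 4) hε4
  have hTne : T.Nonempty := by
    obtain ⟨y, hy, -⟩ := hT 1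
    exact ⟨y, hy⟩
  set N : ℝ := (T.card : ℝ) with hNdef
  have hNnat : 0 < T.card := Finset.card_pos.2 hTne
  have hN : (0 : ℝ) < N := by rw [hNdef]; exact_mod_cast hNnat
  have hN1 : (1 : ℝ) ≤ N := by rw [hNdef]; exact_mod_cast hNnat
  set η : ℝ := ε / (8 * N) with hηdef
  have hη : 0 < η := by positivity
  have hηε : η ≤ ε := by
    rw [hηdef]
    rw [div_le_iff₀ (by positivity)]
    nlinarith
  obtain ⟨s₀, hs₀A, hs₀lt⟩ := Real.lt_sInf_add_pos hAne hη
  obtain ⟨u, hu, rfl⟩ := hs₀A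
  rw [← hα] at hs₀lt
  refine ⟨u, hu, α, fun h => ?_⟩
  have hup : u h ≤ α + ε := by
    have := le_ciSup (hba u hu) h
    linarith
  have hlow : α - ε < u h := by
    by_contra hcon
    push_neg at hcon
    set v : Γ → ℝ := fun h' => ∑ y ∈ T, ((T.card : ℝ))⁻¹ • u (y * h') with hv
    have hvc : IsCombo r v := combo_avg hu T hTne
    have key : ∀ h' : Γ, v h' ≤ α - 5 / 8 * (ε / N) := by
      intro h'
      obtain ⟨y₀, hy₀T, hy₀⟩ := hT (h * h'⁻¹)
      have hy₀' : ∀ a b : Γ, ‖r (a * (h * h'⁻¹) * b) - r (a * y₀ * b)‖ ≤ ε / 4 := by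
        simpa [Real.norm_eq_abs] using hy₀
      have hyd := combo_net₂ hu hy₀' 1 h'
      rw [one_mul, one_mul] at hyd
      have hxh : h * h'⁻¹ * h' = h := by group
      rw [hxh] at hyd
      have h1 : u (y₀ * h') ≤ α - 3 / 4 * ε := by
        have := (abs_le.1 (by simpa [Real.norm_eq_abs] using hyd)).1
        linarith
      have h2 : ∀ y ∈ T, u (y * h') ≤ α + η := by
        intro y hy
        have := le_ciSup (hba u hu) (y * h')
        linarith
      have hsum : ∑ y ∈ T, u (y * h') ≤ (α - 3 / 4 * ε) + (N - 1) * (α + η) := by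
        rw [← Finset.add_sum_erase T _ hy₀T]
        have herase : ∑ y ∈ T.erase y₀, u (y * h') ≤ (N - 1) * (α + η) := by
          have hle := Finset.sum_le_card_nsmul (T.erase y₀) (fun y => u (y * h')) (α + η)
            (fun y hy => h2 y (Finset.mem_of_mem_erase hy))
          rw [nsmul_eq_mul] at hle
          have hcast : ((T.erase y₀).card : ℝ) = N - 1 := by
            rw [Finset.card_erase_of_mem hy₀T]
            have h1N : 1 ≤ T.card := Finset.card_pos.2 hTne
            push_cast [Nat.cast_sub h1N]
            rfl
          rw [hcast] at hle
          exact hle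
        linarith [h1]
      have hveq : v h' = N⁻¹ * ∑ y ∈ T, u (y * h') := by
        rw [hv]
        simp only [smul_eq_mul, ← Finset.mul_sum]
        rw [hNdef]
      have hfin : N⁻¹ * ((α - 3 / 4 * ε) + (N - 1) * (α + η)) ≤ α - 5 / 8 * (ε / N) := by
        rw [← sub_nonneg]
        have hexp : α - 5 / 8 * (ε / N) - N⁻¹ * ((α - 3 / 4 * ε) + (N - 1) * (α + η))
            = N⁻¹ * (ε / 8 - (N - 1) * η) := by
          field_simp
          ring
        rw [hexp]
        have hNη : (N - 1) * η ≤ ε / 8 := by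
          rw [hηdef]
          rw [div_eq_mul_inv]
          have : (N - 1) * (ε * (8 * N)⁻¹) ≤ N * (ε * (8 * N)⁻¹) := by
            apply mul_le_mul_of_nonneg_right (by linarith) (by positivity)
          calc (N - 1) * (ε * (8 * N)⁻¹) ≤ N * (ε * (8 * N)⁻¹) := this
            _ = ε / 8 := by field_simp
        have : 0 ≤ ε / 8 - (N - 1) * η := by linarith
        positivity
      calc v h' = N⁻¹ * ∑ y ∈ T, u (y * h') := hveq
        _ ≤ N⁻¹ * ((α - 3 / 4 * ε) + (N - 1) * (α + η)) := by
            apply mul_le_mul_of_nonneg_left hsum (by positivity)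
        _ ≤ α - 5 / 8 * (ε / N) := hfin
    have hvs : (⨆ h', v h') ≤ α - 5 / 8 * (ε / N) := ciSup_le key
    have hαv : α ≤ ⨆ h', v h' := hαle v hvc
    have hpos : 0 < 5 / 8 * (ε / N) := by positivity
    linarith
  rw [abs_le]
  constructor <;> linarith

end Core


section Closure

variable {Γ : Type*} [Group Γ]

lemma ap_const (c : ℂ) : IsAlmostPeriodic (fun _ : Γ => c) := by
  refine ⟨⟨‖c‖, fun _ => le_rfl⟩, ?_⟩
  refine (totallyBounded_singleton (UniformFun.ofFun fun _ : Γ => c)).subset ?_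
  rintro F ⟨g, rfl⟩
  simp

lemma ap_left {f : Γ → ℂ} (hf : IsAlmostPeriodic f) (a : Γ) :
    IsAlmostPeriodic (fun h => f (a * h)) := by
  obtain ⟨C, hC⟩ := hf.1
  refine ⟨⟨C, fun g => hC _⟩, hf.2.subset ?_⟩
  rintro F ⟨g, rfl⟩
  refine ⟨a * g, ?_⟩
  congr 1
  funext h
  rw [mul_assoc]

lemma ap_right {f : Γ → ℂ} (hf : IsAlmostPeriodic f) (b : Γ) :
    IsAlmostPeriodic (fun h => f (h * b)) := by
  obtain ⟨C, hC⟩ := hf.1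
  refine ⟨⟨C, fun g => hC _⟩, ?_⟩
  have himg := hf.2.image
    (UniformFun.precomp_uniformContinuous (f := fun h : Γ => h * b) (β := ℂ))
  refine himg.subset ?_
  rintro F ⟨g, rfl⟩
  refine ⟨UniformFun.ofFun fun h => f (g * h), ⟨g, rfl⟩, ?_⟩
  have : (fun h => f (g * (h * b))) = fun h => f (g * h * b) := by
    funext h
    rw [mul_assoc]
  exact congrArg UniformFun.ofFun this

lemma ap_translate₂ {f : Γ → ℂ} (hf : IsAlmostPeriodic f) (a b : Γ) :
    IsAlmostPeriodic (fun h => f (a * h * b)) := by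
  have h1 : IsAlmostPeriodic (fun h => f (h * b)) := ap_right hf b
  exact ap_left h1 a

lemma ap_smul (c : ℂ) {f : Γ → ℂ} (hf : IsAlmostPeriodic f) :
    IsAlmostPeriodic (c • f) := by
  obtain ⟨C, hC⟩ := hf.1
  refine ⟨⟨‖c‖ * C, fun x => ?_⟩, ?_⟩
  · have : ‖(c • f) x‖ = ‖c‖ * ‖f x‖ := by
      simp [norm_smul]
    rw [this]
    exact mul_le_mul_of_nonneg_left (hC x) (norm_nonneg c)
  · have himg := hf.2.image
      (UniformFun.postcomp_uniformContinuous (α := Γ) (uniformContinuous_const_smul c))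
    refine himg.subset ?_
    rintro F ⟨g, rfl⟩
    exact ⟨UniformFun.ofFun fun h => f (g * h), ⟨g, rfl⟩, rfl⟩

lemma ap_add {f g : Γ → ℂ} (hf : IsAlmostPeriodic f) (hg : IsAlmostPeriodic g) :
    IsAlmostPeriodic (f + g) := by
  obtain ⟨C, hC⟩ := hf.1
  obtain ⟨D, hD⟩ := hg.1
  refine ⟨⟨C + D, fun x => (norm_add_le _ _).trans (add_le_add (hC x) (hD x))⟩, ?_⟩
  have hcf : IsCompact (closure {F : UniformFun Γ ℂ | ∃ g' : Γ,
      F = UniformFun.ofFun fun h => f (g' * h)}) :=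
    isCompact_iff_totallyBounded_isComplete.2 ⟨hf.2.closure, isClosed_closure.isComplete⟩
  have hcg : IsCompact (closure {F : UniformFun Γ ℂ | ∃ g' : Γ,
      F = UniformFun.ofFun fun h => g (g' * h)}) :=
    isCompact_iff_totallyBounded_isComplete.2 ⟨hg.2.closure, isClosed_closure.isComplete⟩
  have hK : IsCompact ((fun p : (UniformFun Γ ℂ) × (UniformFun Γ ℂ) => p.1 + p.2) ''
      ((closure {F : UniformFun Γ ℂ | ∃ g' : Γ,
        F = UniformFun.ofFun fun h => f (g' * h)}) ×ˢ
       (closure {F : UniformFun Γ ℂ | ∃ g' : Γ,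
        F = UniformFun.ofFun fun h => g (g' * h)}))) :=
    (hcf.prod hcg).image continuous_add
  refine hK.totallyBounded.subset ?_
  rintro F ⟨g', rfl⟩
  exact ⟨(UniformFun.ofFun fun h => f (g' * h), UniformFun.ofFun fun h => g (g' * h)),
    ⟨subset_closure ⟨g', rfl⟩, subset_closure ⟨g', rfl⟩⟩, rfl⟩

end Closure


section Mean

universe u
variable {Γ : Type u} [Group Γ] {M : (Γ → ℂ) → ℂ}

variable (hadd : ∀ f₁ f₂ : Γ → ℂ, IsAlmostPeriodic f₁ → IsAlmostPeriodic f₂ →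
      M (f₁ + f₂) = M f₁ + M f₂)
    (hsmul : ∀ (c : ℂ) (f : Γ → ℂ), IsAlmostPeriodic f → M (c • f) = c * M f)
    (hone : M (fun _ => 1) = 1)
    (hbound : ∀ (f : Γ → ℂ) (C : ℝ), IsAlmostPeriodic f → (∀ g, ‖f g‖ ≤ C) → ‖M f‖ ≤ C)
    (hleft : ∀ (f : Γ → ℂ) (g : Γ), IsAlmostPeriodic f → M (fun h => f (g * h)) = M f)
    (hright : ∀ (f : Γ → ℂ) (g : Γ), IsAlmostPeriodic f → M (fun h => f (h * g)) = M f)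

include hleft hright in
lemma M_translate₂ {f : Γ → ℂ} (hf : IsAlmostPeriodic f) (a b : Γ) :
    M (fun h => f (a * h * b)) = M f := by
  have hg : IsAlmostPeriodic (fun h => f (a * h)) := ap_left hf a
  have he : (fun h => f (a * h * b)) = fun h => (fun h' => f (a * h')) (h * b) := by
    funext h
    rw [mul_assoc]
  rw [he, hright _ b hg, hleft _ a hf]

set_option linter.unusedSectionVars false in
include hadd hsmul hone hleft hright in
lemma M_partial {f : Γ → ℂ} (hf : IsAlmostPeriodic f) {ι : Type*} (s : Finset ι)
    (μ : ι → ℝ) (a b : ι → Γ) :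
    IsAlmostPeriodic (fun h => ∑ i ∈ s, μ i • f (a i * h * b i)) ∧
      M (fun h => ∑ i ∈ s, μ i • f (a i * h * b i)) = (∑ i ∈ s, μ i) • M f := by
  classical
  induction s using Finset.cons_induction with
  | empty =>
    have h0 : (fun h : Γ => ∑ i ∈ (∅ : Finset ι), μ i • f (a i * h * b i)) = fun _ : Γ => (0 : ℂ) := by
      funext h
      simp
    constructor
    · rw [h0]
      exact ap_const 0
    · rw [h0]
      have h1 : (fun _ : Γ => (0 : ℂ)) = (0 : ℂ) • (fun _ : Γ => (1 : ℂ)) := by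
        funext h
        simp
      rw [h1, hsmul 0 _ (ap_const 1)]
      simp
  | cons i s his ih =>
    have hterm_eq : (fun h => μ i • f (a i * h * b i)) =
        ((μ i : ℂ)) • (fun h => f (a i * h * b i)) := by
      funext h
      simp [Complex.real_smul]
    have htr : IsAlmostPeriodic (fun h => f (a i * h * b i)) := ap_translate₂ hf (a i) (b i)
    have hterm_ap : IsAlmostPeriodic (fun h => μ i • f (a i * h * b i)) := by
      rw [hterm_eq]
      exact ap_smul _ htr
    have hsplit : (fun h => ∑ j ∈ Finset.cons i s his, μ j • f (a j * h * b j)) =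
        (fun h => μ i • f (a i * h * b i)) + (fun h => ∑ j ∈ s, μ j • f (a j * h * b j)) := by
      funext h
      rw [Finset.sum_cons]
      rfl
    constructor
    · rw [hsplit]
      exact ap_add hterm_ap ih.1
    · rw [hsplit, hadd _ _ hterm_ap ih.1, ih.2]
      have hMterm : M (fun h => μ i • f (a i * h * b i)) = (μ i : ℂ) * M f := by
        rw [hterm_eq, hsmul _ _ htr, M_translate₂ hleft hright hf (a i) (b i)]
      rw [hMterm, Finset.sum_cons, add_smul]
      simp [Complex.real_smul]

include hadd hsmul hone hleft hright in
lemma M_combo {f u : Γ → ℂ} (hf : IsAlmostPeriodic f) (hu : IsCombo f u) :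
    IsAlmostPeriodic u ∧ M u = M f := by
  obtain ⟨ι, s, μ, a, b, h0, h1, huh⟩ := hu
  have hue : u = fun h => ∑ i ∈ s, μ i • f (a i * h * b i) := funext huh
  obtain ⟨hap, hM⟩ := M_partial hadd hsmul hone hleft hright hf s μ a b
  rw [hue]
  refine ⟨hap, ?_⟩
  rw [hM, h1, one_smul]

end Mean


section NearConst

universe u
variable {Γ : Type u} [Group Γ]

/-- Main approximation: some convex combination of two-sided translates of an almost periodic
function is uniformly within `2ε` of a constant. The combination is produced in two stages
(one for the real part, one for the imaginary part). -/
lemma near_const {f : Γ → ℂ} (hf : IsAlmostPeriodic f) {ε : ℝ} (hε : 0 < ε) :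
    ∃ (w₁ w : Γ → ℂ) (c : ℂ), IsCombo f w₁ ∧ IsCombo w₁ w ∧ ∀ h, ‖w h - c‖ ≤ 2 * ε := by
  obtain ⟨C, hC⟩ := hf.1
  -- stage 1 : real part
  set r₁ : Γ → ℝ := fun g => (f g).re with hr₁
  have hCre : ∀ g, |r₁ g| ≤ C := fun g =>
    (Complex.abs_re_le_norm (f g)).trans (hC g)
  have hnet₁ : ∀ δ : ℝ, 0 < δ → ∃ T : Finset Γ, ∀ x : Γ, ∃ y ∈ T,
      ∀ a b : Γ, |r₁ (a * x * b) - r₁ (a * y * b)| ≤ δ := by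
    intro δ hδ
    obtain ⟨T, hT⟩ := twoSidedNet hf hδ
    refine ⟨T, fun x => ?_⟩
    obtain ⟨y, hyT, hy⟩ := hT x
    refine ⟨y, hyT, fun a b => ?_⟩
    have h1 : |(f (a * x * b) - f (a * y * b)).re| ≤ δ :=
      (Complex.abs_re_le_norm _).trans (hy a b)
    simpa [hr₁, Complex.sub_re] using h1
  obtain ⟨u₁, hu₁c, c₁, hu₁⟩ := core r₁ C hCre hnet₁ hε
  obtain ⟨ι, s, μ, a, b, h0, h1, hu₁h⟩ := hu₁c
  set w₁ : Γ → ℂ := fun h => ∑ i ∈ s, μ i • f (a i * h * b i) with hw₁def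
  have hw₁ : IsCombo f w₁ := ⟨ι, s, μ, a, b, h0, h1, fun h => rfl⟩
  have hw₁re : ∀ g, (w₁ g).re = u₁ g := by
    intro g
    rw [hu₁h g, hw₁def]
    simp [Complex.re_sum, Complex.smul_re, hr₁]
  have hre_all : ∀ g, |(w₁ g).re - c₁| ≤ ε := fun g => by rw [hw₁re g]; exact hu₁ g
  -- stage 2 : imaginary part
  have hCw : ∀ g, ‖w₁ g‖ ≤ C := combo_bound hw₁ hC
  set r₂ : Γ → ℝ := fun g => (w₁ g).im with hr₂
  have hCim : ∀ g, |r₂ g| ≤ C := fun g =>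
    (Complex.abs_im_le_norm (w₁ g)).trans (hCw g)
  have hnet₂ : ∀ δ : ℝ, 0 < δ → ∃ T : Finset Γ, ∀ x : Γ, ∃ y ∈ T,
      ∀ a b : Γ, |r₂ (a * x * b) - r₂ (a * y * b)| ≤ δ := by
    intro δ hδ
    obtain ⟨T, hT⟩ := twoSidedNet hf hδ
    refine ⟨T, fun x => ?_⟩
    obtain ⟨y, hyT, hy⟩ := hT x
    refine ⟨y, hyT, fun A B => ?_⟩
    have hw := combo_net₂ hw₁ hy A B
    have h1 : |(w₁ (A * x * B) - w₁ (A * y * B)).im| ≤ δ :=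
      (Complex.abs_im_le_norm _).trans hw
    simpa [hr₂, Complex.sub_im] using h1
  obtain ⟨u₂, hu₂c, c₂, hu₂⟩ := core r₂ C hCim hnet₂ hε
  obtain ⟨ι', s', ν, a', b', k0, k1, hu₂h⟩ := hu₂c
  set w : Γ → ℂ := fun h => ∑ k ∈ s', ν k • w₁ (a' k * h * b' k) with hwdef
  have hw : IsCombo w₁ w := ⟨ι', s', ν, a', b', k0, k1, fun h => rfl⟩
  have hwim : ∀ g, (w g).im = u₂ g := by
    intro g
    rw [hu₂h g, hwdef]
    simp [Complex.im_sum, Complex.smul_im, hr₂]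
  have hwim_all : ∀ g, |(w g).im - c₂| ≤ ε := fun g => by rw [hwim g]; exact hu₂ g
  have hwre_all : ∀ g, |(w g).re - c₁| ≤ ε := by
    intro g
    have hre : (w g).re = ∑ k ∈ s', ν k • (w₁ (a' k * g * b' k)).re := by
      rw [hwdef]
      simp [Complex.re_sum, Complex.smul_re]
    rw [hre]
    have := convex_est s' ν (fun k => (w₁ (a' k * g * b' k)).re) c₁ k0 k1
      (fun k _ => by simpa [Real.norm_eq_abs] using hre_all (a' k * g * b' k))
    simpa [Real.norm_eq_abs] using this
  refine ⟨w₁, w, Complex.mk c₁ c₂, hw₁, hw, fun h => ?_⟩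
  have habs := Complex.norm_le_abs_re_add_abs_im (w h - Complex.mk c₁ c₂)
  have hre : (w h - Complex.mk c₁ c₂).re = (w h).re - c₁ := by simp [Complex.sub_re]
  have him : (w h - Complex.mk c₁ c₂).im = (w h).im - c₂ := by simp [Complex.sub_im]
  rw [hre, him] at habs
  have := hwre_all h
  have := hwim_all h
  linarith

end NearConst

end VNM


/-- Uniqueness of the von Neumann mean: any two left- and right-invariant means on the almost
periodic functions on a group `Γ` agree on every almost periodic function; in particular they
agree on every almost periodic function of the form `g ↦ φ(g • x)` coming from an action of
`Γ` on a set `S`. -/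
theorem stmt17 {Γ S : Type*} [Group Γ] [MulAction Γ S]
    (M₁ M₂ : (Γ → ℂ) → ℂ)
    (hadd : ∀ M ∈ [M₁, M₂], ∀ f₁ f₂ : Γ → ℂ, IsAlmostPeriodic f₁ → IsAlmostPeriodic f₂ →
      M (f₁ + f₂) = M f₁ + M f₂)
    (hsmul : ∀ M ∈ [M₁, M₂], ∀ (c : ℂ) (f : Γ → ℂ), IsAlmostPeriodic f →
      M (c • f) = c * M f)
    (hone : ∀ M ∈ [M₁, M₂], M (fun _ => 1) = 1)
    (hbound : ∀ M ∈ [M₁, M₂], ∀ (f : Γ → ℂ) (C : ℝ), IsAlmostPeriodic f →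
      (∀ g, ‖f g‖ ≤ C) → ‖M f‖ ≤ C)
    (hleft : ∀ M ∈ [M₁, M₂], ∀ (f : Γ → ℂ) (g : Γ), IsAlmostPeriodic f →
      M (fun h => f (g * h)) = M f)
    (hright : ∀ M ∈ [M₁, M₂], ∀ (f : Γ → ℂ) (g : Γ), IsAlmostPeriodic f →
      M (fun h => f (h * g)) = M f) :
    (∀ (φ : S → ℂ) (x : S), IsAlmostPeriodic (fun g : Γ => φ (g • x)) →
      M₁ (fun g : Γ => φ (g • x)) = M₂ (fun g : Γ => φ (g • x))) ∧
    ∀ f : Γ → ℂ, IsAlmostPeriodic f → M₁ f = M₂ f := by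
  have m₁ : M₁ ∈ [M₁, M₂] := by simp
  have m₂ : M₂ ∈ [M₁, M₂] := by simp
  have main : ∀ f : Γ → ℂ, IsAlmostPeriodic f → M₁ f = M₂ f := by
    intro f hf
    have hMeq : ∀ M : (Γ → ℂ) → ℂ, M ∈ [M₁, M₂] → ∀ ε : ℝ, 0 < ε →
        ∀ (w₁ w : Γ → ℂ) (c : ℂ), VNM.IsCombo f w₁ → VNM.IsCombo w₁ w →
        (∀ h, ‖w h - c‖ ≤ 2 * ε) → ‖M f - c‖ ≤ 2 * ε := by
      intro M hM ε hε w₁ w c hc₁ hc₂ hwc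
      obtain ⟨hapw₁, hMw₁⟩ := VNM.M_combo (hadd M hM) (hsmul M hM) (hone M hM)
        (hleft M hM) (hright M hM) hf hc₁
      obtain ⟨hapw, hMw⟩ := VNM.M_combo (hadd M hM) (hsmul M hM) (hone M hM)
        (hleft M hM) (hright M hM) hapw₁ hc₂
      have hapc : IsAlmostPeriodic (fun _ : Γ => -c) := VNM.ap_const (-c)
      have hMc : M (fun _ : Γ => -c) = -c := by
        have he : (fun _ : Γ => -c) = (-c) • (fun _ : Γ => (1 : ℂ)) := by
          funext h
          simp
        rw [he, hsmul M hM _ _ (VNM.ap_const 1), hone M hM, mul_one]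
      have hsum := hadd M hM w (fun _ => -c) hapw hapc
      have hbnd := hbound M hM (w + fun _ => -c) (2 * ε) (VNM.ap_add hapw hapc)
        (fun g => by simpa [sub_eq_add_neg] using hwc g)
      rw [hsum, hMc, hMw, hMw₁] at hbnd
      simpa [sub_eq_add_neg] using hbnd
    have hdiff : ∀ ε : ℝ, 0 < ε → ‖M₁ f - M₂ f‖ ≤ 4 * ε := by
      intro ε hε
      obtain ⟨w₁, w, c, hc₁, hc₂, hwc⟩ := VNM.near_const hf hε
      have h₁ := hMeq M₁ m₁ ε hε w₁ w c hc₁ hc₂ hwc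
      have h₂ := hMeq M₂ m₂ ε hε w₁ w c hc₁ hc₂ hwc
      have hte : M₁ f - M₂ f = (M₁ f - c) - (M₂ f - c) := by ring
      have := norm_sub_le (M₁ f - c) (M₂ f - c)
      rw [← hte] at this
      linarith
    by_contra hne
    have hpos : 0 < ‖M₁ f - M₂ f‖ := by
      rw [norm_pos_iff]
      exact sub_ne_zero.2 hne
    have := hdiff (‖M₁ f - M₂ f‖ / 8) (by linarith)
    linarith
  exact ⟨fun φ x h => main _ h, main⟩
end
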